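/- arXiv:2101.00642 — 2 statements merged into one kernel-verified Lean document; each statement's English description precedes it below -/
import Mathlib

section
/- Let k be an odd integer with k ≥ 9 and let d = (3k+5)/2. Then K(d,k) = 4k+8, i.e., the maximum length of a d-dimensional circuit code of spread k is 4k+8. -/
/-- The graph of the `d`-dimensional hypercube: vertices are binary vectors of
length `d`, adjacent iff they differ in exactly one coordinate. -/
def hypercube (d : ℕ) : SimpleGraph (Fin d → Bool) where
  Adj x y := hammingDist x y = 1
  symm := by
    constructor
    intro x y h
    rwa [hammingDist_comm]
  loopless := by
    constructor
    intro x h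
    simp [hammingDist_self] at h

/-- Distance along a cycle of length `N` between positions `i` and `j`. -/
def cycDist {N : ℕ} (i j : ZMod N) : ℕ := min (i - j).val (j - i).val

/-- `x : ZMod N → (Fin d → Bool)` is a `(d,k)` circuit code of length `N`:
a cycle in the hypercube `I(d)` satisfying the spread-`k` distance requirement. -/
structure IsCircuitCode (d k N : ℕ) (x : ZMod N → Fin d → Bool) : Prop where
  inj : Function.Injective x
  adj : ∀ i : ZMod N, (hypercube d).Adj (x i) (x (i + 1))
  spread : ∀ i j : ZMod N, min (cycDist i j) k ≤ (hypercube d).dist (x i) (x j)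

/-- `τ` is the transition sequence of the cycle `x`: `τ i` is the unique
coordinate in which `x i` and `x (i+1)` differ. -/
def IsTransitionSeq {d N : ℕ} (x : ZMod N → Fin d → Bool) (τ : ZMod N → Fin d) : Prop :=
  ∀ (i : ZMod N) (j : Fin d), x (i + 1) j ≠ x i j ↔ j = τ i

/-- The segment of `τ` of length `m` starting at position `start` is a bit run:
all of its entries are distinct. -/
def IsBitRun {d N : ℕ} (τ : ZMod N → Fin d) (start : ZMod N) (m : ℕ) : Prop :=
  ∀ a b : Fin m, τ (start + ((a : ℕ) : ZMod N)) = τ (start + ((b : ℕ) : ZMod N)) → a = b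

/-- `δ(ω)`: the number of coordinates appearing an odd number of times in the
segment of `τ` of length `m` starting at `start`. -/
def segDelta {d N : ℕ} (τ : ZMod N → Fin d) (start : ZMod N) (m : ℕ) : ℕ :=
  (Finset.univ.filter fun c : Fin d =>
    Odd (Finset.univ.filter fun t : Fin m => τ (start + ((t : ℕ) : ZMod N)) = c).card).card


open Finset

lemma walk_hamming {d : ℕ} {x y : Fin d → Bool} (w : (hypercube d).Walk x y) :
    hammingDist x y ≤ w.length := by
  induction w with
  | nil => simp
  | cons h w ih =>
    rename_i u v z
    calc hammingDist u z ≤ hammingDist u v + hammingDist v z := hammingDist_triangle _ _ _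
    _ ≤ 1 + w.length := by have : hammingDist u v = 1 := h; omega
    _ = (SimpleGraph.Walk.cons h w).length := by simp [SimpleGraph.Walk.length_cons]; omega

lemma exists_walk_hamming {d : ℕ} (n : ℕ) : ∀ (x y : Fin d → Bool), hammingDist x y = n →
    ∃ w : (hypercube d).Walk x y, w.length = n := by
  induction n with
  | zero => intro x y h; rw [hammingDist_eq_zero] at h; subst h; exact ⟨SimpleGraph.Walk.nil, rfl⟩
  | succ n ih =>
    intro x y h
    have hne : x ≠ y := by intro he; subst he; simp [hammingDist_self] at h
    have : ∃ c, x c ≠ y c := by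
      by_contra hc
      push_neg at hc
      exact hne (funext hc)
    obtain ⟨c, hc⟩ := this
    set x' := Function.update x c (y c) with hx'
    have hadj : (hypercube d).Adj x x' := by
      show hammingDist x x' = 1
      have : (Finset.univ.filter fun i => x i ≠ x' i) = {c} := by
        ext i
        simp only [mem_filter, mem_univ, true_and, mem_singleton]
        constructor
        · intro hi
          by_contra hic
          simp [hx', Function.update_of_ne hic] at hi
        · intro hi; subst hi; simp [hx', hc]
      show (Finset.univ.filter fun i => x i ≠ x' i).card = 1
      rw [this]; simp
    have hd' : hammingDist x' y = n := by
      have hsub : (Finset.univ.filter fun i => x' i ≠ y i)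
          = (Finset.univ.filter fun i => x i ≠ y i) \ {c} := by
        ext i
        simp only [mem_filter, mem_univ, true_and, mem_sdiff, mem_singleton]
        by_cases hic : i = c
        · subst hic; simp [hx']
        · simp [hx', Function.update_of_ne hic, hic]
      show (Finset.univ.filter fun i => x' i ≠ y i).card = n
      rw [hsub, card_sdiff_of_subset (by simp only [singleton_subset_iff, mem_filter]; exact ⟨mem_univ _, hc⟩)]
      have : (Finset.univ.filter fun i => x i ≠ y i).card = n + 1 := h
      simp [this]
    obtain ⟨w, hw⟩ := ih x' y hd'
    exact ⟨SimpleGraph.Walk.cons hadj w, by simp [hw]⟩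

lemma hyper_dist {d : ℕ} (x y : Fin d → Bool) :
    (hypercube d).dist x y = hammingDist x y := by
  obtain ⟨w, hw⟩ := exists_walk_hamming (hammingDist x y) x y rfl
  have h1 : (hypercube d).dist x y ≤ hammingDist x y := hw ▸ SimpleGraph.dist_le w
  have hr : (hypercube d).Reachable x y := ⟨w⟩
  obtain ⟨p, hp⟩ := hr.exists_walk_length_eq_dist
  have h2 : hammingDist x y ≤ (hypercube d).dist x y := hp ▸ walk_hamming p
  omega

section Machinery
variable {d k N : ℕ}

noncomputable def tau [NeZero d] (x : ZMod N → Fin d → Bool) (i : ZMod N) : Fin d :=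
  if h : ∃ c, x (i+1) c ≠ x i c then h.choose else default

lemma tau_spec [NeZero d] {x : ZMod N → Fin d → Bool} (hc : IsCircuitCode d k N x)
    (i : ZMod N) (c : Fin d) : x (i+1) c ≠ x i c ↔ c = tau x i := by
  have hadj : hammingDist (x i) (x (i+1)) = 1 := hc.adj i
  rw [show hammingDist (x i) (x (i+1))
      = (Finset.univ.filter fun c => x (i+1) c ≠ x i c).card from by
    show (Finset.univ.filter fun c => x i c ≠ x (i+1) c).card = _
    congr 1; ext c; simp [ne_comm]] at hadj
  obtain ⟨a, ha⟩ := card_eq_one.mp hadj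
  have hex : ∃ c, x (i+1) c ≠ x i c := by
    refine ⟨a, ?_⟩
    have : a ∈ Finset.univ.filter fun c => x (i+1) c ≠ x i c := ha ▸ mem_singleton_self a
    exact (mem_filter.mp this).2
  have htau : tau x i = hex.choose := by rw [tau]; simp [hex]
  have hch : x (i+1) hex.choose ≠ x i hex.choose := hex.choose_spec
  constructor
  · intro h
    have h1 : c ∈ Finset.univ.filter fun c => x (i+1) c ≠ x i c := by simp [h]
    have h2 : hex.choose ∈ Finset.univ.filter fun c => x (i+1) c ≠ x i c := by simp [hch]
    rw [ha, mem_singleton] at h1 h2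
    rw [htau, h1, h2]
  · intro h
    rw [h, htau]; exact hch

noncomputable def cnt [NeZero d] (x : ZMod N → Fin d → Bool) (i : ZMod N) (m : ℕ) (c : Fin d) : ℕ :=
  ((range m).filter (fun t => tau x (i + (t:ℕ)) = c)).card

lemma cnt_succ [NeZero d] (x : ZMod N → Fin d → Bool) (i : ZMod N) (m : ℕ) (c : Fin d) :
    cnt x i (m+1) c = cnt x i m c + (if tau x (i + (m:ℕ)) = c then 1 else 0) := by
  unfold cnt
  rw [range_add_one, filter_insert]
  by_cases h : tau x (i + (m:ℕ)) = c
  · rw [if_pos h, if_pos h, card_insert_of_notMem (by simp)]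
  · rw [if_neg h, if_neg h, Nat.add_zero]

lemma window_parity [NeZero d] {x : ZMod N → Fin d → Bool} (hc : IsCircuitCode d k N x) :
    ∀ (m : ℕ) (i : ZMod N) (c : Fin d), (x (i + (m:ℕ)) c ≠ x i c) ↔ Odd (cnt x i m c) := by
  intro m
  induction m with
  | zero => intro i c; simp [cnt]
  | succ m ih =>
    intro i c
    have key : x (i + (m:ℕ) + 1) c ≠ x (i + (m:ℕ)) c ↔ c = tau x (i + (m:ℕ)) := tau_spec hc _ c
    have hrw : i + ((m+1 : ℕ) : ZMod N) = i + (m:ℕ) + 1 := by push_cast; ring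
    rw [hrw, cnt_succ]
    have hbool : ∀ a b c : Bool, a ≠ b → ((a ≠ c) ↔ ¬ (b ≠ c)) := by decide
    by_cases ht : tau x (i + (m:ℕ)) = c
    · rw [if_pos ht, Nat.odd_add_one, ← ih i c]
      exact hbool _ _ _ (key.mpr ht.symm)
    · rw [if_neg ht, Nat.add_zero, ← ih i c]
      have hstep : x (i + (m:ℕ) + 1) c = x (i + (m:ℕ)) c := by
        by_contra hne; exact ht (key.mp hne).symm
      rw [hstep]

lemma ham_window [NeZero d] {x : ZMod N → Fin d → Bool} (hc : IsCircuitCode d k N x)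
    (i : ZMod N) (m : ℕ) :
    hammingDist (x i) (x (i + (m:ℕ)))
      = (Finset.univ.filter fun c => Odd (cnt x i m c)).card := by
  show (Finset.univ.filter fun c => x i c ≠ x (i + (m:ℕ)) c).card = _
  congr 1; ext c
  simp only [mem_filter, mem_univ, true_and]
  rw [ne_comm, window_parity hc m i c]

lemma sum_cnt [NeZero d] (x : ZMod N → Fin d → Bool) (i : ZMod N) (m : ℕ) :
    ∑ c, cnt x i m c = m := by
  unfold cnt
  exact ((Finset.card_eq_sum_card_fiberwise
    (fun t _ => mem_univ (tau x (i + (t:ℕ))))).symm.trans (card_range m))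

lemma odd_filter_parity {α : Type*} [Fintype α] [DecidableEq α] (f : α → ℕ) :
    (Finset.univ.filter fun a => Odd (f a)).card % 2 = (∑ a, f a) % 2 := by
  rw [Finset.sum_nat_mod]
  have : ∑ a, f a % 2 = ∑ a, (if Odd (f a) then 1 else 0) := by
    apply Finset.sum_congr rfl
    intro a _
    by_cases h : Odd (f a)
    · simp [h, Nat.odd_iff.mp h]
    · simp [h, Nat.even_iff.mp (Nat.not_odd_iff_even.mp h)]
  rw [this, Finset.sum_boole]
  simp

lemma ham_parity [NeZero d] {x : ZMod N → Fin d → Bool} (hc : IsCircuitCode d k N x)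
    (i : ZMod N) (m : ℕ) :
    hammingDist (x i) (x (i + (m:ℕ))) % 2 = m % 2 := by
  rw [ham_window hc i m, odd_filter_parity, sum_cnt]

lemma spread_ham [NeZero d] [NeZero N] {x : ZMod N → Fin d → Bool} (hc : IsCircuitCode d k N x)
    (i : ZMod N) (m : ℕ) (hm : 0 < m) (hm2 : m < N) :
    min (min m (N - m)) k ≤ hammingDist (x i) (x (i + (m:ℕ))) := by
  have hsp := hc.spread i (i + (m:ℕ))
  rw [hyper_dist] at hsp
  have hmz : ((m:ℕ) : ZMod N) ≠ 0 := by
    intro h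
    have := (ZMod.natCast_eq_zero_iff m N).mp h
    have := Nat.le_of_dvd hm this
    omega
  have h1 : ((i + (m:ℕ)) - i) = ((m:ℕ) : ZMod N) := by ring
  have h2 : (i - (i + (m:ℕ))) = -((m:ℕ) : ZMod N) := by ring
  have hv1 : (((m:ℕ) : ZMod N)).val = m := ZMod.val_natCast_of_lt hm2
  have hv2 : (-((m:ℕ) : ZMod N)).val = N - m := by
    rw [ZMod.neg_val]
    simp [hmz, hv1]
  have hcyc : cycDist i (i + (m:ℕ)) = min (N - m) m := by
    unfold cycDist
    rw [h1, h2, hv1, hv2]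
  rw [hcyc] at hsp
  calc min (min m (N - m)) k = min (min (N-m) m) k := by rw [min_comm m]
  _ ≤ _ := hsp

end Machinery

section Upper
open Finset
variable {k d N : ℕ}

lemma ham_as_sum {d : ℕ} (a b : Fin d → Bool) :
    hammingDist a b = ∑ c, (if a c ≠ b c then 1 else 0) := Finset.card_filter _ _

lemma plotkin5 {d : ℕ} (y0 y1 y2 y3 y4 : Fin d → Bool) :
    hammingDist y0 y1 + hammingDist y0 y2 + hammingDist y0 y3 + hammingDist y0 y4 +
    hammingDist y1 y2 + hammingDist y1 y3 + hammingDist y1 y4 +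
    hammingDist y2 y3 + hammingDist y2 y4 + hammingDist y3 y4 ≤ 6 * d := by
  have key : ∀ b0 b1 b2 b3 b4 : Bool,
      ((if b0 ≠ b1 then 1 else 0) + (if b0 ≠ b2 then 1 else 0) + (if b0 ≠ b3 then 1 else 0) +
       (if b0 ≠ b4 then 1 else 0) + (if b1 ≠ b2 then 1 else 0) + (if b1 ≠ b3 then 1 else 0) +
       (if b1 ≠ b4 then 1 else 0) + (if b2 ≠ b3 then 1 else 0) + (if b2 ≠ b4 then 1 else 0) +
       (if b3 ≠ b4 then 1 else 0) : ℕ) ≤ 6 := by decide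
  simp only [ham_as_sum]
  simp only [← Finset.sum_add_distrib]
  calc ∑ c, ((if y0 c ≠ y1 c then 1 else 0) + (if y0 c ≠ y2 c then 1 else 0) +
        (if y0 c ≠ y3 c then 1 else 0) + (if y0 c ≠ y4 c then 1 else 0) +
        (if y1 c ≠ y2 c then 1 else 0) + (if y1 c ≠ y3 c then 1 else 0) +
        (if y1 c ≠ y4 c then 1 else 0) + (if y2 c ≠ y3 c then 1 else 0) +
        (if y2 c ≠ y4 c then 1 else 0) + (if y3 c ≠ y4 c then 1 else 0))
      ≤ ∑ _c : Fin d, (6:ℕ) := Finset.sum_le_sum (fun c _ => key _ _ _ _ _)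
  _ = 6 * d := by simp [Finset.sum_const, mul_comm]

lemma N_even [NeZero d] [NeZero N] {x : ZMod N → Fin d → Bool}
    (hc : IsCircuitCode d k N x) : N % 2 = 0 := by
  have h := ham_parity hc 0 N
  rw [show ((N:ℕ) : ZMod N) = 0 from ZMod.natCast_self N] at h
  simp [hammingDist_self] at h
  omega

lemma pair_lb [NeZero d] [NeZero N] {x : ZMod N → Fin d → Bool}
    (hc : IsCircuitCode d k N x) (hk : k % 2 = 1)
    (j : ZMod N) (m : ℕ) (hm2 : m % 2 = 0) (hmk : k + 1 ≤ m) (hmN : m + k ≤ N) :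
    k + 1 ≤ hammingDist (x j) (x (j + (m:ℕ))) := by
  have h1 := spread_ham hc j m (by omega) (by omega)
  have h2 := ham_parity hc j m
  omega

end Upper

section Upper2
open Finset
variable {k d N : ℕ}

lemma fiveptA [NeZero d] [NeZero N] {x : ZMod N → Fin d → Bool}
    (hc : IsCircuitCode d k N x) (hk : k % 2 = 1) (hk9 : 9 ≤ k) (hd : 2*d = 3*k+5)
    (hN : 4*k+12 ≤ N) : False := by
  set i : ZMod N := 0 with hi
  set A0 : ZMod N := i with hA0
  set A1 : ZMod N := i + ((k+1 : ℕ) : ZMod N) with hA1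
  set A2 : ZMod N := i + ((2*k+2 : ℕ) : ZMod N) with hA2
  set A3 : ZMod N := i + ((3*k+3 : ℕ) : ZMod N) with hA3
  set A4 : ZMod N := i + ((4*k+4 : ℕ) : ZMod N) with hA4
  have S := plotkin5 (x A0) (x A1) (x A2) (x A3) (x A4)
  have e01 : A1 = A0 + ((k+1 : ℕ) : ZMod N) := by rw [hA0, hA1]
  have e02 : A2 = A0 + ((2*k+2 : ℕ) : ZMod N) := by rw [hA0, hA2]
  have e03 : A3 = A0 + ((3*k+3 : ℕ) : ZMod N) := by rw [hA0, hA3]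
  have e04 : A4 = A0 + ((4*k+4 : ℕ) : ZMod N) := by rw [hA0, hA4]
  have e12 : A2 = A1 + ((k+1 : ℕ) : ZMod N) := by rw [hA1, hA2]; push_cast; ring
  have e13 : A3 = A1 + ((2*k+2 : ℕ) : ZMod N) := by rw [hA1, hA3]; push_cast; ring
  have e14 : A4 = A1 + ((3*k+3 : ℕ) : ZMod N) := by rw [hA1, hA4]; push_cast; ring
  have e23 : A3 = A2 + ((k+1 : ℕ) : ZMod N) := by rw [hA2, hA3]; push_cast; ring
  have e24 : A4 = A2 + ((2*k+2 : ℕ) : ZMod N) := by rw [hA2, hA4]; push_cast; ring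
  have e34 : A4 = A3 + ((k+1 : ℕ) : ZMod N) := by rw [hA3, hA4]; push_cast; ring
  have b1 : k + 1 ≤ hammingDist (x A0) (x A1) := by
    rw [e01]; exact pair_lb hc hk A0 (k+1) (by omega) (by omega) (by omega)
  have b2 : k + 1 ≤ hammingDist (x A0) (x A2) := by
    rw [e02]; exact pair_lb hc hk A0 (2*k+2) (by omega) (by omega) (by omega)
  have b3 : k + 1 ≤ hammingDist (x A0) (x A3) := by
    rw [e03]; exact pair_lb hc hk A0 (3*k+3) (by omega) (by omega) (by omega)
  have b5 : k + 1 ≤ hammingDist (x A1) (x A2) := by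
    rw [e12]; exact pair_lb hc hk A1 (k+1) (by omega) (by omega) (by omega)
  have b6 : k + 1 ≤ hammingDist (x A1) (x A3) := by
    rw [e13]; exact pair_lb hc hk A1 (2*k+2) (by omega) (by omega) (by omega)
  have b7 : k + 1 ≤ hammingDist (x A1) (x A4) := by
    rw [e14]; exact pair_lb hc hk A1 (3*k+3) (by omega) (by omega) (by omega)
  have b8 : k + 1 ≤ hammingDist (x A2) (x A3) := by
    rw [e23]; exact pair_lb hc hk A2 (k+1) (by omega) (by omega) (by omega)
  have b9 : k + 1 ≤ hammingDist (x A2) (x A4) := by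
    rw [e24]; exact pair_lb hc hk A2 (2*k+2) (by omega) (by omega) (by omega)
  have b10 : k + 1 ≤ hammingDist (x A3) (x A4) := by
    rw [e34]; exact pair_lb hc hk A3 (k+1) (by omega) (by omega) (by omega)
  rcases le_or_gt (5*k+4) N with hbig | hsmall
  · have b4 : k + 1 ≤ hammingDist (x A0) (x A4) := by
      rw [e04]; exact pair_lb hc hk A0 (4*k+4) (by omega) (by omega) (by omega)
    omega
  · have b4 : N - (4*k+4) ≤ hammingDist (x A0) (x A4) := by
      rw [e04]
      have h1 := spread_ham hc A0 (4*k+4) (by omega) (by omega)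
      omega
    omega

lemma fiveptB [NeZero d] [NeZero N] {x : ZMod N → Fin d → Bool}
    (hc : IsCircuitCode d k N x) (hk : k % 2 = 1) (hk9 : 9 ≤ k) (hd : 2*d = 3*k+5)
    (hN : N = 4*k+10) (i : ZMod N) :
    hammingDist (x i) (x (i + ((k+1 : ℕ) : ZMod N))) = k + 1 ∧
    hammingDist (x i) (x (i + ((2*k+2 : ℕ) : ZMod N))) = k + 1 := by
  set A0 : ZMod N := i with hA0
  set A1 : ZMod N := i + ((k+1 : ℕ) : ZMod N) with hA1
  set A2 : ZMod N := i + ((2*k+2 : ℕ) : ZMod N) with hA2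
  set A3 : ZMod N := i + ((3*k+3 : ℕ) : ZMod N) with hA3
  set A4 : ZMod N := i + ((4*k+4 : ℕ) : ZMod N) with hA4
  have S := plotkin5 (x A0) (x A1) (x A2) (x A3) (x A4)
  have e01 : A1 = A0 + ((k+1 : ℕ) : ZMod N) := by rw [hA0, hA1]
  have e02 : A2 = A0 + ((2*k+2 : ℕ) : ZMod N) := by rw [hA0, hA2]
  have e03 : A3 = A0 + ((3*k+3 : ℕ) : ZMod N) := by rw [hA0, hA3]
  have e04 : A4 = A0 + ((4*k+4 : ℕ) : ZMod N) := by rw [hA0, hA4]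
  have e12 : A2 = A1 + ((k+1 : ℕ) : ZMod N) := by rw [hA1, hA2]; push_cast; ring
  have e13 : A3 = A1 + ((2*k+2 : ℕ) : ZMod N) := by rw [hA1, hA3]; push_cast; ring
  have e14 : A4 = A1 + ((3*k+3 : ℕ) : ZMod N) := by rw [hA1, hA4]; push_cast; ring
  have e23 : A3 = A2 + ((k+1 : ℕ) : ZMod N) := by rw [hA2, hA3]; push_cast; ring
  have e24 : A4 = A2 + ((2*k+2 : ℕ) : ZMod N) := by rw [hA2, hA4]; push_cast; ring
  have e34 : A4 = A3 + ((k+1 : ℕ) : ZMod N) := by rw [hA3, hA4]; push_cast; ring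
  have b1 : k + 1 ≤ hammingDist (x A0) (x A1) := by
    rw [e01]; exact pair_lb hc hk A0 (k+1) (by omega) (by omega) (by omega)
  have b2 : k + 1 ≤ hammingDist (x A0) (x A2) := by
    rw [e02]; exact pair_lb hc hk A0 (2*k+2) (by omega) (by omega) (by omega)
  have b3 : k + 1 ≤ hammingDist (x A0) (x A3) := by
    rw [e03]; exact pair_lb hc hk A0 (3*k+3) (by omega) (by omega) (by omega)
  have b5 : k + 1 ≤ hammingDist (x A1) (x A2) := by
    rw [e12]; exact pair_lb hc hk A1 (k+1) (by omega) (by omega) (by omega)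
  have b6 : k + 1 ≤ hammingDist (x A1) (x A3) := by
    rw [e13]; exact pair_lb hc hk A1 (2*k+2) (by omega) (by omega) (by omega)
  have b7 : k + 1 ≤ hammingDist (x A1) (x A4) := by
    rw [e14]; exact pair_lb hc hk A1 (3*k+3) (by omega) (by omega) (by omega)
  have b8 : k + 1 ≤ hammingDist (x A2) (x A3) := by
    rw [e23]; exact pair_lb hc hk A2 (k+1) (by omega) (by omega) (by omega)
  have b9 : k + 1 ≤ hammingDist (x A2) (x A4) := by
    rw [e24]; exact pair_lb hc hk A2 (2*k+2) (by omega) (by omega) (by omega)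
  have b10 : k + 1 ≤ hammingDist (x A3) (x A4) := by
    rw [e34]; exact pair_lb hc hk A3 (k+1) (by omega) (by omega) (by omega)
  have b4 : 6 ≤ hammingDist (x A0) (x A4) := by
    rw [e04]
    have h1 := spread_ham hc A0 (4*k+4) (by omega) (by omega)
    omega
  exact ⟨by omega, by omega⟩

end Upper2

section Upper3
open Finset
variable {k d N : ℕ}

lemma sep_lemma [NeZero d] [NeZero N] {x : ZMod N → Fin d → Bool}
    (hc : IsCircuitCode d k N x) (hkN : k + 1 < N)
    (hE1 : ∀ j : ZMod N, hammingDist (x j) (x (j + ((k+1 : ℕ) : ZMod N))) = k + 1) :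
    ∀ p q : ZMod N, p ≠ q → tau x p = tau x q → k + 1 ≤ (q - p).val := by
  intro p q hpq htau
  by_contra hv
  push_neg at hv
  set v : ℕ := (q - p).val with hvdef
  have hvne : v ≠ 0 := by
    intro h0
    have hz : q - p = 0 := (ZMod.val_eq_zero _).mp (by rw [← hvdef]; exact h0)
    exact hpq (sub_eq_zero.mp hz).symm
  have hvk : v ≤ k := by omega
  have hE := hE1 p
  rw [ham_window hc p (k+1)] at hE
  set f : ℕ → Fin d := fun t => tau x (p + (t:ℕ)) with hf
  have hf0v : f v = f 0 := by
    have h1 : ((v:ℕ) : ZMod N) = q - p := by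
      rw [hvdef, ZMod.natCast_val, ZMod.cast_id]
    have h2 : p + ((v:ℕ) : ZMod N) = q := by rw [h1]; ring
    simp only [hf]
    rw [h2]
    push_cast
    rw [add_zero]
    exact htau.symm
  have hsub : (Finset.univ.filter fun c => Odd (cnt x p (k+1) c))
      ⊆ ((range (k+1)).erase v).image f := by
    intro c hcmem
    rw [mem_filter] at hcmem
    have hodd := hcmem.2
    have hpos : 0 < cnt x p (k+1) c := by
      rcases hodd with ⟨t, ht⟩; omega
    rw [cnt, card_pos] at hpos
    obtain ⟨t, ht⟩ := hpos
    rw [mem_filter, mem_range] at ht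
    rcases eq_or_ne t v with rfl | htv
    · refine mem_image.mpr ⟨0, ?_, ?_⟩
      · exact mem_erase.mpr ⟨(Ne.symm hvne), mem_range.mpr (by omega)⟩
      · rw [← hf0v]; exact ht.2
    · exact mem_image.mpr ⟨t, mem_erase.mpr ⟨htv, mem_range.mpr ht.1⟩, ht.2⟩
  have hcard := card_le_card hsub
  rw [hE] at hcard
  have h1 : (((range (k+1)).erase v).image f).card ≤ ((range (k+1)).erase v).card :=
    card_image_le
  have h2 : ((range (k+1)).erase v).card = k := by
    rw [card_erase_of_mem (mem_range.mpr (by omega)), card_range]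
    omega
  omega

lemma sep_nat [NeZero d] [NeZero N] {x : ZMod N → Fin d → Bool}
    (hsep : ∀ p q : ZMod N, p ≠ q → tau x p = tau x q → k + 1 ≤ (q - p).val)
    (i : ZMod N) (t t' : ℕ) (htt : t < t') (ht'N : t' < N) (hdiff : t' - t ≤ k)
    (heq : tau x (i + (t:ℕ)) = tau x (i + (t':ℕ))) : False := by
  set p : ZMod N := i + (t:ℕ) with hp
  set q : ZMod N := i + (t':ℕ) with hq
  have hqp : q - p = ((t' - t : ℕ) : ZMod N) := by
    rw [hp, hq]
    push_cast [Nat.cast_sub (le_of_lt htt)]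
    ring
  have hval : (q - p).val = t' - t := by
    rw [hqp, ZMod.val_natCast_of_lt (by omega)]
  have hpq : p ≠ q := by
    intro h
    have : (q - p).val = 0 := by rw [h]; simp
    omega
  have := hsep p q hpq heq
  omega

end Upper3

section Upper4
open Finset
variable {k d N : ℕ}

noncomputable def Occ [NeZero d] [NeZero N] (x : ZMod N → Fin d → Bool) (c : Fin d) : Finset (ZMod N) :=
  univ.filter (fun p => tau x p = c)

lemma sum_occ [NeZero d] [NeZero N] (x : ZMod N → Fin d → Bool) :
    ∑ c, (Occ x c).card = N := by
  unfold Occ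
  have h := (Finset.card_eq_sum_card_fiberwise
    (f := fun p : ZMod N => tau x p) (s := univ) (t := univ) (fun p _ => mem_univ _)).symm
  rw [h, card_univ, ZMod.card]

lemma occ_eq_cnt [NeZero d] [NeZero N] (x : ZMod N → Fin d → Bool) (c : Fin d) :
    (Occ x c).card = cnt x 0 N c := by
  unfold Occ cnt
  apply Finset.card_bij (fun p _ => p.val)
  · intro p hp
    rw [mem_filter] at hp ⊢
    refine ⟨mem_range.mpr (ZMod.val_lt p), ?_⟩
    rw [show ((0:ZMod N) + ((p.val : ℕ) : ZMod N)) = p from by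
      rw [ZMod.natCast_val, ZMod.cast_id]; ring]
    exact hp.2
  · intro p hp q hq h
    exact ZMod.val_injective N h
  · intro t ht
    rw [mem_filter, mem_range] at ht
    refine ⟨((t:ℕ) : ZMod N), ?_, ?_⟩
    · rw [mem_filter]
      refine ⟨mem_univ _, ?_⟩
      rw [← ht.2]
      congr 1
      ring
    · exact ZMod.val_natCast_of_lt ht.1

lemma occ_even [NeZero d] [NeZero N] {x : ZMod N → Fin d → Bool}
    (hc : IsCircuitCode d k N x) (c : Fin d) : (Occ x c).card % 2 = 0 := by
  rw [occ_eq_cnt]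
  have h := (window_parity hc N 0 c)
  have hx : x ((0:ZMod N) + ((N:ℕ) : ZMod N)) c = x 0 c := by
    rw [ZMod.natCast_self, add_zero]
  rw [Nat.odd_iff] at h
  by_cases ho : cnt x 0 N c % 2 = 1
  · exact absurd hx (h.mpr ho)
  · omega

lemma occ_le4 [NeZero d] [NeZero N] {x : ZMod N → Fin d → Bool}
    (hsep : ∀ p q : ZMod N, p ≠ q → tau x p = tau x q → k + 1 ≤ (q - p).val)
    (hN : N = 4*k+10) (hk9 : 9 ≤ k) (c : Fin d) :
    (Occ x c).card ≤ 4 := by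
  have hinj : ∀ z ∈ (Occ x c) ×ˢ (range (k+1)), ∀ w ∈ (Occ x c) ×ˢ (range (k+1)),
      z.1 + ((z.2 : ℕ) : ZMod N) = w.1 + ((w.2 : ℕ) : ZMod N) → z = w := by
    rintro ⟨p, t⟩ hz ⟨p', t'⟩ hw h
    have hzO : p ∈ Occ x c := (mem_product.mp hz).1
    have hzR : t < k+1 := mem_range.mp (mem_product.mp hz).2
    have hwO : p' ∈ Occ x c := (mem_product.mp hw).1
    have hwR : t' < k+1 := mem_range.mp (mem_product.mp hw).2
    simp only at h ⊢
    have hkey : ∀ (a b : ZMod N) (u u' : ℕ), u < k+1 → u' < k+1 → u' ≤ u →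
        a ∈ Occ x c → b ∈ Occ x c → a + ((u : ℕ) : ZMod N) = b + ((u' : ℕ) : ZMod N) →
        a = b ∧ u = u' := by
      intro a b u u' hu hu' huu ha hb heq
      have hba : b - a = ((u - u' : ℕ) : ZMod N) := by
        rw [Nat.cast_sub huu]
        linear_combination -heq
      have hval : (b - a).val = u - u' := by
        rw [hba, ZMod.val_natCast_of_lt (by omega)]
      rcases eq_or_ne a b with rfl | hab
      · have h0 : (0:ℕ) = u - u' := by simpa using hval
        exact ⟨rfl, by omega⟩
      · exfalso
        have hstau : tau x a = tau x b := by
          simp only [Occ, mem_filter, mem_univ, true_and] at ha hb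
          rw [ha, hb]
        have := hsep a b hab hstau
        have hne0 : u - u' ≠ 0 := by
          intro h0
          apply hab
          have : b - a = 0 := by rw [hba, h0]; simp
          exact (sub_eq_zero.mp this).symm
        omega
    rcases le_total t' t with hle | hle
    · obtain ⟨h1, h2⟩ := hkey p p' t t' hzR hwR hle hzO hwO h
      rw [h1, h2]
    · obtain ⟨h1, h2⟩ := hkey p' p t' t hwR hzR hle hwO hzO h.symm
      rw [h1, h2]
  have hcard := Finset.card_le_card_of_injOn (fun z => z.1 + ((z.2 : ℕ) : ZMod N))
    (fun z _ => mem_univ _) (fun z hz w hw h => hinj z hz w hw h)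
  rw [card_product, card_range, card_univ, ZMod.card] at hcard
  by_contra hgt
  push_neg at hgt
  have : 5 * (k+1) ≤ (Occ x c).card * (k+1) := by
    apply Nat.mul_le_mul_right; omega
  omega

end Upper4

section Upper5
open Finset
variable {k d N : ℕ}

lemma M_le2 [NeZero d] [NeZero N] {x : ZMod N → Fin d → Bool}
    (hsep : ∀ p q : ZMod N, p ≠ q → tau x p = tau x q → k + 1 ≤ (q - p).val)
    (hN : N = 4*k+10) (i : ZMod N) (c : Fin d) : cnt x i (2*k+2) c ≤ 2 := by
  by_contra hgt
  push_neg at hgt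
  rw [cnt] at hgt
  obtain ⟨a, b, c3, ha, hb, hc3, hab, hac, hbc⟩ := Finset.two_lt_card_iff.mp hgt
  rw [mem_filter, mem_range] at ha hb hc3
  have hpair : ∀ u w : ℕ, w < 2*k+2 → tau x (i + (u:ℕ)) = c → tau x (i + (w:ℕ)) = c →
      u < w → k + 1 ≤ w - u := by
    intro u w hw2 hu hwt huw
    by_contra hle
    push_neg at hle
    exact sep_nat hsep i u w huw (by omega) (by omega) (by rw [hu, hwt])
  have key : ∀ u w : ℕ, u < 2*k+2 → w < 2*k+2 → tau x (i + (u:ℕ)) = c →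
      tau x (i + (w:ℕ)) = c → u ≠ w → k + 1 ≤ w - u ∨ k + 1 ≤ u - w := by
    intro u w hu2 hw2 hu hw hne
    rcases lt_or_gt_of_ne hne with h | h
    · exact Or.inl (hpair u w hw2 hu hw h)
    · exact Or.inr (hpair w u hu2 hw hu h)
  have k1 := key a b ha.1 hb.1 ha.2 hb.2 hab
  have k2 := key a c3 ha.1 hc3.1 ha.2 hc3.2 hac
  have k3 := key b c3 hb.1 hc3.1 hb.2 hc3.2 hbc
  have := ha.1; have := hb.1; have := hc3.1
  omega

lemma M2_count [NeZero d] [NeZero N] {x : ZMod N → Fin d → Bool}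
    (hc : IsCircuitCode d k N x)
    (hsep : ∀ p q : ZMod N, p ≠ q → tau x p = tau x q → k + 1 ≤ (q - p).val)
    (hN : N = 4*k+10) (i : ZMod N)
    (hE2 : hammingDist (x i) (x (i + ((2*k+2 : ℕ) : ZMod N))) = k + 1) :
    2 * (univ.filter fun c => cnt x i (2*k+2) c = 2).card = k + 1 := by
  have hsum : ∑ c, cnt x i (2*k+2) c = 2*k+2 := sum_cnt x i (2*k+2)
  have hodd : (univ.filter fun c => Odd (cnt x i (2*k+2) c)).card = k + 1 := by
    rw [← ham_window hc i (2*k+2)]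
    exact hE2
  have hodd1 : (univ.filter fun c => Odd (cnt x i (2*k+2) c))
      = (univ.filter fun c => cnt x i (2*k+2) c = 1) := by
    apply filter_congr
    intro c _
    have hle := M_le2 hsep hN i c
    have : ∀ n : ℕ, n ≤ 2 → (Odd n ↔ n = 1) := by decide
    exact iff_iff_eq.mp (this _ hle) ▸ Iff.rfl
  have hpt : ∀ n : ℕ, n ≤ 2 → n = (if n = 1 then 1 else 0) + 2*(if n = 2 then 1 else 0) := by
    decide
  have hsplit : ∑ c, cnt x i (2*k+2) c
      = (univ.filter fun c => cnt x i (2*k+2) c = 1).card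
        + 2 * (univ.filter fun c => cnt x i (2*k+2) c = 2).card := by
    rw [card_filter, card_filter, Finset.mul_sum, ← Finset.sum_add_distrib]
    apply Finset.sum_congr rfl
    intro c _
    exact hpt _ (M_le2 hsep hN i c)
  rw [hodd1] at hodd
  omega

end Upper5

section Upper6
open Finset
variable {k d N : ℕ}

lemma occ4_windows [NeZero d] [NeZero N] {x : ZMod N → Fin d → Bool}
    (hsep : ∀ p q : ZMod N, p ≠ q → tau x p = tau x q → k + 1 ≤ (q - p).val)
    (hN : N = 4*k+10) (hk9 : 9 ≤ k) (c : Fin d) (h4 : (Occ x c).card = 4) :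
    4*k - 2 ≤ (univ.filter fun i : ZMod N => cnt x i (2*k+2) c = 2).card := by
  classical
  set O := Occ x c with hO
  have htauO : ∀ p ∈ O, tau x p = c := by
    intro p hp; simpa [hO, Occ] using hp
  have hsepO : ∀ p ∈ O, ∀ q ∈ O, p ≠ q → k + 1 ≤ (q - p).val := by
    intro p hp q hq hne
    exact hsep p q hne (by rw [htauO p hp, htauO q hq])
  have hEr : ∀ p ∈ O, ((O.erase p).image (fun q => (q - p).val)).Nonempty := by
    intro p hp
    apply Finset.Nonempty.image
    rw [← card_pos, card_erase_of_mem hp, h4]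
    omega
  set g : ZMod N → ℕ := fun p =>
    if h : ((O.erase p).image (fun q => (q - p).val)).Nonempty then
      ((O.erase p).image (fun q => (q - p).val)).min' h else 0 with hg
  have hgmem : ∀ p ∈ O, ∃ q ∈ O.erase p, (q - p).val = g p := by
    intro p hp
    have h := hEr p hp
    have : g p ∈ (O.erase p).image (fun q => (q - p).val) := by
      rw [hg]; simp only [dif_pos h]; exact min'_mem _ h
    obtain ⟨q, hq, hqv⟩ := mem_image.mp this
    exact ⟨q, hq, hqv⟩
  have hgmin : ∀ p ∈ O, ∀ q ∈ O.erase p, g p ≤ (q - p).val := by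
    intro p hp q hq
    have h := hEr p hp
    rw [hg]; simp only [dif_pos h]
    exact min'_le _ _ (mem_image_of_mem _ hq)
  have hglb : ∀ p ∈ O, k + 1 ≤ g p := by
    intro p hp
    obtain ⟨q, hq, hqv⟩ := hgmem p hp
    rw [← hqv]
    exact hsepO p hp q (mem_of_mem_erase hq) (fun h => (mem_erase.mp hq).1 h.symm)
  have hgltN : ∀ p ∈ O, g p < N := by
    intro p hp
    obtain ⟨q, hq, hqv⟩ := hgmem p hp
    rw [← hqv]
    exact ZMod.val_lt _
  have hnext : ∀ p ∈ O, p + ((g p : ℕ) : ZMod N) ∈ O.erase p := by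
    intro p hp
    obtain ⟨q, hq, hqv⟩ := hgmem p hp
    have : ((g p : ℕ) : ZMod N) = q - p := by rw [← hqv, ZMod.natCast_val, ZMod.cast_id]
    rw [this]
    convert hq using 1
    ring
  -- sum of gaps at most N
  have hgsum : ∑ p ∈ O, g p ≤ N := by
    have hcard : (O.sigma (fun p => range (g p))).card = ∑ p ∈ O, g p := by
      rw [Finset.card_sigma]
      exact Finset.sum_congr rfl (fun p _ => card_range _)
    rw [← hcard]
    have := Finset.card_le_card_of_injOn
      (f := fun z : (_ : ZMod N) × ℕ => z.1 + ((z.2 : ℕ) : ZMod N))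
      (s := O.sigma (fun p => range (g p))) (t := univ)
      (fun z _ => mem_univ _) ?_
    · rw [card_univ, ZMod.card] at this
      exact this
    · rintro ⟨p, s⟩ hz ⟨p', s'⟩ hw h
      simp only [Finset.mem_coe, Finset.mem_sigma, mem_range] at hz hw
      simp only at h
      have hkey : ∀ (a b : ZMod N) (u u' : ℕ), a ∈ O → b ∈ O → u < g a → u' < g b →
          u' ≤ u → a + ((u : ℕ) : ZMod N) = b + ((u' : ℕ) : ZMod N) → a = b ∧ u = u' := by
        intro a b u u' ha hb hu hu' huu heq
        have hba : b - a = ((u - u' : ℕ) : ZMod N) := by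
          rw [Nat.cast_sub huu]
          linear_combination -heq
        have hval : (b - a).val = u - u' := by
          rw [hba, ZMod.val_natCast_of_lt (by have := hgltN a ha; omega)]
        rcases eq_or_ne a b with rfl | hab
        · have h0 : (0:ℕ) = u - u' := by simpa using hval
          exact ⟨rfl, by omega⟩
        · exfalso
          have hbe : b ∈ O.erase a := mem_erase.mpr ⟨fun h => hab h.symm, hb⟩
          have := hgmin a ha b hbe
          omega
      rcases le_total s' s with hle | hle
      · obtain ⟨h1, h2⟩ := hkey p p' s s' hz.1 hw.1 hz.2 hw.2 hle h
        subst h1; subst h2; rfl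
      · obtain ⟨h1, h2⟩ := hkey p' p s' s hw.1 hz.1 hw.2 hz.2 hle h.symm
        subst h1; subst h2; rfl
  have hgub : ∀ p ∈ O, g p ≤ k + 7 := by
    intro p hp
    have hsplit : g p + ∑ q ∈ O.erase p, g q = ∑ q ∈ O, g q :=
      Finset.add_sum_erase O (fun q => g q) hp
    have hlow : ∀ q ∈ O.erase p, k + 1 ≤ g q :=
      fun q hq => hglb q (mem_of_mem_erase hq)
    have hcard3 : (O.erase p).card = 3 := by rw [card_erase_of_mem hp, h4]
    have := Finset.card_nsmul_le_sum (O.erase p) (fun q => g q) (k+1) hlow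
    rw [hcard3] at this
    simp only [smul_eq_mul] at this
    omega
  -- the window fact
  have hwin : ∀ p ∈ O, ∀ t : ℕ, t < 2*k+2 - g p →
      cnt x (p - ((t:ℕ) : ZMod N)) (2*k+2) c = 2 := by
    intro p hp t ht
    have hgk := hglb p hp
    have hgu := hgub p hp
    have htk : t ≤ k := by omega
    set i : ZMod N := p - ((t:ℕ) : ZMod N) with hi
    rw [cnt]
    have hfe : (range (2*k+2)).filter (fun t' => tau x (i + ((t':ℕ) : ZMod N)) = c)
        = {t, t + g p} := by
      ext t'
      simp only [mem_filter, mem_range, mem_insert, mem_singleton]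
      constructor
      · rintro ⟨ht', htau⟩
        have hqO : i + ((t':ℕ) : ZMod N) ∈ O := by
          rw [hO, Occ, mem_filter]; exact ⟨mem_univ _, htau⟩
        set q : ZMod N := i + ((t':ℕ) : ZMod N) with hq
        set w : ℕ := (q - p).val with hw
        have hqp : q - p = ((w : ℕ) : ZMod N) := by
          rw [hw, ZMod.natCast_val, ZMod.cast_id]
        have ht'val : t' = (w + t) % N := by
          have h1 : ((t' : ℕ) : ZMod N) = q - i := by rw [hq]; ring
          have h2 : q - i = ((w + t : ℕ) : ZMod N) := by
            rw [hi]
            push_cast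
            rw [← hqp]
            ring
          have h3 : ((t' : ℕ) : ZMod N).val = (((w + t : ℕ)) : ZMod N).val := by
            rw [h1, h2]
          rw [ZMod.val_natCast, ZMod.val_natCast] at h3
          rw [Nat.mod_eq_of_lt (by omega)] at h3
          exact h3
        rcases eq_or_ne q p with hqp' | hqne
        · left
          have : w = 0 := by rw [hw, hqp']; simp
          rw [ht'val, this, Nat.zero_add, Nat.mod_eq_of_lt (by omega)]
        · rcases eq_or_ne q (p + ((g p : ℕ) : ZMod N)) with hqn | hqnn
          · right
            have : w = g p := by
              rw [hw, hqn]
              have : p + ((g p : ℕ) : ZMod N) - p = ((g p : ℕ) : ZMod N) := by ring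
              rw [this, ZMod.val_natCast_of_lt (hgltN p hp)]
            rw [ht'val, this, Nat.mod_eq_of_lt (by omega)]
            omega
          · exfalso
            -- q is one of the two other occurrences: w is large
            have hwge : g p ≤ w := hgmin p hp q (mem_erase.mpr ⟨hqne, hqO⟩)
            have hwN : w < N := ZMod.val_lt _
            have hpn : p + ((g p : ℕ) : ZMod N) ∈ O := mem_of_mem_erase (hnext p hp)
            have hq2 : k + 1 ≤ (q - (p + ((g p : ℕ) : ZMod N))).val := by
              apply hsepO _ hpn q hqO (fun h => hqnn h.symm)
            have hq2v : (q - (p + ((g p : ℕ) : ZMod N))).val = w - g p := by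
              have he : q - (p + ((g p : ℕ) : ZMod N)) = ((w - g p : ℕ) : ZMod N) := by
                rw [Nat.cast_sub hwge]
                rw [← hqp]
                ring
              rw [he, ZMod.val_natCast_of_lt (by omega)]
            have hwbig : 2*k+2 ≤ w := by omega
            have hq3 : k + 1 ≤ (p - q).val := by
              apply hsepO q hqO p hp hqne
            have hq3v : (p - q).val = N - w := by
              have he : p - q = -((w:ℕ) : ZMod N) := by
                rw [← hqp]; ring
              rw [he, ZMod.neg_val]
              have : ((w:ℕ) : ZMod N) ≠ 0 := by
                intro h0
                have := congrArg ZMod.val h0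
                rw [ZMod.val_natCast_of_lt hwN] at this
                simp at this
                omega
              rw [if_neg this, ZMod.val_natCast_of_lt hwN]
            have hwle : w ≤ N - (k+1) := by omega
            have : t' = w + t := by
              rw [ht'val, Nat.mod_eq_of_lt (by omega)]
            omega
      · intro h
        rcases h with rfl | rfl
        · constructor
          · omega
          · have : i + ((t':ℕ) : ZMod N) = p := by rw [hi]; ring
            rw [this]; exact htauO p hp
        · constructor
          · omega
          · have : i + ((t + g p : ℕ) : ZMod N) = p + ((g p : ℕ) : ZMod N) := by
              rw [hi]; push_cast; ring
            rw [this]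
            exact htauO _ (mem_of_mem_erase (hnext p hp))
    rw [hfe]
    rw [card_insert_of_notMem (by simp; omega), card_singleton]
  -- count the windows
  have hSig : (O.sigma (fun p => range (2*k+2 - g p))).card
      = ∑ p ∈ O, (2*k+2 - g p) := by
    rw [Finset.card_sigma]
    exact Finset.sum_congr rfl (fun p _ => card_range _)
  have hsum_lb : 4*k - 2 ≤ ∑ p ∈ O, (2*k+2 - g p) := by
    have e1 : ∑ p ∈ O, (2*k+2 - g p) + ∑ p ∈ O, g p = ∑ p ∈ O, (2*k+2 : ℕ) := by
      rw [← Finset.sum_add_distrib]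
      apply Finset.sum_congr rfl
      intro p hp
      have := hgub p hp
      omega
    rw [Finset.sum_const, h4, smul_eq_mul] at e1
    omega
  have hinj := Finset.card_le_card_of_injOn
    (f := fun z : (_ : ZMod N) × ℕ => z.1 - ((z.2 : ℕ) : ZMod N))
    (s := O.sigma (fun p => range (2*k+2 - g p)))
    (t := univ.filter fun i : ZMod N => cnt x i (2*k+2) c = 2)
    ?_ ?_
  · rw [hSig] at hinj
    omega
  · rintro ⟨p, t⟩ hz
    simp only [Finset.mem_coe, Finset.mem_sigma, mem_range] at hz
    rw [Finset.mem_coe, mem_filter]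
    exact ⟨mem_univ _, hwin p hz.1 t hz.2⟩
  · rintro ⟨p, t⟩ hz ⟨p', t'⟩ hw h
    simp only [Finset.mem_coe, Finset.mem_sigma, mem_range] at hz hw
    simp only at h
    have htb : t ≤ k := by have := hglb p hz.1; omega
    have htb' : t' ≤ k := by have := hglb p' hw.1; omega
    have hkey : ∀ (a b : ZMod N) (u u' : ℕ), a ∈ O → b ∈ O → u ≤ k → u' ≤ k →
        u ≤ u' → a - ((u : ℕ) : ZMod N) = b - ((u' : ℕ) : ZMod N) → a = b ∧ u = u' := by
      intro a b u u' ha hb hu hu' huu heq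
      have hba : b - a = ((u' - u : ℕ) : ZMod N) := by
        rw [Nat.cast_sub huu]
        linear_combination -heq
      have hval : (b - a).val = u' - u := by
        rw [hba, ZMod.val_natCast_of_lt (by omega)]
      rcases eq_or_ne a b with rfl | hab
      · have h0 : (0:ℕ) = u' - u := by simpa using hval
        exact ⟨rfl, by omega⟩
      · exfalso
        have := hsepO a ha b hb hab
        omega
    rcases le_total t t' with hle | hle
    · obtain ⟨h1, h2⟩ := hkey p p' t t' hz.1 hw.1 htb htb' hle h
      subst h1; subst h2; rfl
    · obtain ⟨h1, h2⟩ := hkey p' p t' t hw.1 hz.1 htb' htb hle h.symm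
      subst h1; subst h2; rfl

end Upper6

section Upper7
open Finset

theorem upper_bound {k d N : ℕ} (hk : k % 2 = 1) (hk9 : 9 ≤ k) (hd : 2*d = 3*k+5)
    (x : ZMod N → Fin d → Bool) (hc : IsCircuitCode d k N x) : N ≤ 4*k+8 := by
  by_contra hle
  push_neg at hle
  haveI : NeZero d := ⟨by omega⟩
  haveI : NeZero N := ⟨by omega⟩
  have hNe := N_even hc
  rcases le_or_gt (4*k+12) N with hbig | hsm
  · exact fiveptA hc hk hk9 hd hbig
  · have hN : N = 4*k+10 := by omega
    have hE1 : ∀ j : ZMod N, hammingDist (x j) (x (j + ((k+1 : ℕ) : ZMod N))) = k + 1 :=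
      fun j => (fiveptB hc hk hk9 hd hN j).1
    have hE2 : ∀ j : ZMod N, hammingDist (x j) (x (j + ((2*k+2 : ℕ) : ZMod N))) = k + 1 :=
      fun j => (fiveptB hc hk hk9 hd hN j).2
    have hsep := sep_lemma hc (by omega) hE1
    set S4 := univ.filter (fun c : Fin d => (Occ x c).card = 4) with hS4
    have hS4lb : k + 5 ≤ 2 * S4.card := by
      have h1 : ∑ c, (Occ x c).card = N := sum_occ x
      have h2 : ∀ c, (Occ x c).card ≤ 2 + (if (Occ x c).card = 4 then 2 else 0) := by
        intro c
        have he := occ_even hc c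
        have h4 := occ_le4 hsep hN hk9 c
        by_cases h : (Occ x c).card = 4
        · simp [h]
        · simp only [h, if_false]
          omega
      have h3 : N ≤ ∑ c : Fin d, (2 + (if (Occ x c).card = 4 then 2 else 0)) := by
        have := Finset.sum_le_sum (f := fun c => (Occ x c).card)
          (g := fun c => 2 + (if (Occ x c).card = 4 then 2 else 0))
          (s := univ) (fun c _ => h2 c)
        rw [h1] at this
        exact this
      rw [Finset.sum_add_distrib, Finset.sum_const, card_univ, Fintype.card_fin] at h3
      have h5 : ∑ c : Fin d, (if (Occ x c).card = 4 then 2 else 0) = 2 * S4.card := by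
        rw [hS4, card_filter, Finset.mul_sum]
        apply Finset.sum_congr rfl
        intro c _
        by_cases h : (Occ x c).card = 4 <;> simp [h]
      rw [h5] at h3
      simp only [smul_eq_mul] at h3
      omega
    set Q := (univ ×ˢ univ : Finset (ZMod N × Fin d)).filter
      (fun z => cnt x z.1 (2*k+2) z.2 = 2) with hQ
    have hrow : 2 * Q.card = N * (k+1) := by
      have h1 : Q.card = ∑ i : ZMod N, (univ.filter fun c => cnt x i (2*k+2) c = 2).card := by
        rw [hQ, card_filter, Finset.sum_product]
        exact Finset.sum_congr rfl (fun i _ => (card_filter _ _).symm)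
      rw [h1, Finset.mul_sum]
      rw [Finset.sum_congr rfl (fun i _ => M2_count hc hsep hN i (hE2 i)),
        Finset.sum_const, card_univ, ZMod.card, smul_eq_mul]
    have hcol : S4.card * (4*k - 2) ≤ Q.card := by
      have h1 : Q.card = ∑ c : Fin d, (univ.filter fun i => cnt x i (2*k+2) c = 2).card := by
        rw [hQ, card_filter, Finset.sum_product, Finset.sum_comm]
        exact Finset.sum_congr rfl (fun c _ => (card_filter _ _).symm)
      rw [h1]
      calc S4.card * (4*k-2) = ∑ _c ∈ S4, (4*k-2) := by rw [Finset.sum_const, smul_eq_mul]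
      _ ≤ ∑ c ∈ S4, (univ.filter fun i => cnt x i (2*k+2) c = 2).card := by
          apply Finset.sum_le_sum
          intro c hcS
          rw [hS4, mem_filter] at hcS
          exact occ4_windows hsep hN hk9 c hcS.2
      _ ≤ ∑ c : Fin d, (univ.filter fun i => cnt x i (2*k+2) c = 2).card :=
          Finset.sum_le_sum_of_subset (filter_subset _ _)
    have hrow' : 2 * Q.card = (4*k+10) * (k+1) := by rw [hrow, hN]
    have h6 : (k+5) * (4*k-2) ≤ 2 * Q.card := by
      calc (k+5) * (4*k-2) ≤ (2 * S4.card) * (4*k-2) := Nat.mul_le_mul_right _ hS4lb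
      _ = 2 * (S4.card * (4*k-2)) := by ring
      _ ≤ 2 * Q.card := by omega
    have hA : (4*k - 2) + 2 = 4*k := by omega
    nlinarith [h6, hrow', hA, hk9]

end Upper7

section Exist1
open Finset

/-- transition coordinate at position `p` for the length-`8m+12` code in dimension `3m+4`,
spread `2m+1`. -/
def occf (m p : ℕ) : ℕ :=
  if p % (2*m+3) % 2 = 0 then (p % (2*m+3)) / 2
  else (m+2) + ((p / (2*m+3)) % 2) * (m+1) + (p % (2*m+3) - 1) / 2

lemma occf_lt (m p : ℕ) : occf m p < 3*m+4 := by
  unfold occf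
  have h1 : p % (2*m+3) < 2*m+3 := Nat.mod_lt _ (by omega)
  have h2 : p / (2*m+3) % 2 = 0 ∨ p / (2*m+3) % 2 = 1 := by omega
  rcases h2 with h2 | h2 <;> rw [h2] <;> split <;> omega

lemma occf_period (m p : ℕ) : occf m (p + (8*m+12)) = occf m p := by
  have h1 : (p + (8*m+12)) % (2*m+3) = p % (2*m+3) := by
    rw [show 8*m+12 = 4*(2*m+3) from by ring, Nat.add_mul_mod_self_right]
  have h2 : (p + (8*m+12)) / (2*m+3) = p / (2*m+3) + 4 := by
    rw [show 8*m+12 = 4*(2*m+3) from by ring, Nat.add_mul_div_right _ _ (by omega)]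
  have h3 : (p / (2*m+3) + 4) % 2 = p / (2*m+3) % 2 := by omega
  unfold occf
  rw [h1, h2, h3]

lemma occf_2K (m p : ℕ) : occf m (p + 2*(2*m+3)) = occf m p := by
  have h1 : (p + 2*(2*m+3)) % (2*m+3) = p % (2*m+3) := by
    rw [show 2*(2*m+3) = 2*(2*m+3) from rfl, Nat.add_mul_mod_self_right]
  have h2 : (p + 2*(2*m+3)) / (2*m+3) = p / (2*m+3) + 2 := by
    rw [Nat.add_mul_div_right _ _ (by omega)]
  have h3 : (p / (2*m+3) + 2) % 2 = p / (2*m+3) % 2 := by omega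
  unfold occf
  rw [h1, h2, h3]

lemma occf_collide {m p p' : ℕ} (h : occf m p = occf m p') (hlt : p < p')
    (hsmall : p' - p < 2*(2*m+3)) : p' - p = 2*m+3 ∧ p % (2*m+3) % 2 = 0 := by
  have hK : 0 < 2*m+3 := by omega
  have hr : p % (2*m+3) < 2*m+3 := Nat.mod_lt _ hK
  have hr' : p' % (2*m+3) < 2*m+3 := Nat.mod_lt _ hK
  have hb : p / (2*m+3) % 2 = 0 ∨ p / (2*m+3) % 2 = 1 := by omega
  have hb' : p' / (2*m+3) % 2 = 0 ∨ p' / (2*m+3) % 2 = 1 := by omega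
  have hdvd_step : p % (2*m+3) = p' % (2*m+3) → p' - p = 2*m+3 := by
    intro hmod
    have hme : p ≡ p' [MOD 2*m+3] := hmod
    have hdvd := (Nat.modEq_iff_dvd' (le_of_lt hlt)).mp hme
    obtain ⟨j, hj⟩ := hdvd
    have hj2 : j < 2 := by
      by_contra hc
      push_neg at hc
      have : (2*m+3)*2 ≤ (2*m+3)*j := Nat.mul_le_mul_left _ hc
      omega
    have hj1 : j ≠ 0 := by
      intro h0
      rw [h0, Nat.mul_zero] at hj
      omega
    have : j = 1 := by omega
    rw [this, Nat.mul_one] at hj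
    omega
  unfold occf at h
  by_cases he : p % (2*m+3) % 2 = 0 <;> by_cases he' : p' % (2*m+3) % 2 = 0
  · rw [if_pos he, if_pos he'] at h
    have hrr : p % (2*m+3) = p' % (2*m+3) := by omega
    exact ⟨hdvd_step hrr, he⟩
  · rw [if_pos he, if_neg he'] at h
    exfalso
    rcases hb' with h2 | h2 <;> rw [h2] at h <;> omega
  · rw [if_neg he, if_pos he'] at h
    exfalso
    rcases hb with h2 | h2 <;> rw [h2] at h <;> omega
  · rw [if_neg he, if_neg he'] at h
    exfalso
    rcases hb with h2 | h2 <;> rcases hb' with h3 | h3 <;> rw [h2, h3] at h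
    · have hrr : p % (2*m+3) = p' % (2*m+3) := by omega
      have hstep := hdvd_step hrr
      have hp' : p' = p + (2*m+3) := by omega
      have : p' / (2*m+3) = p / (2*m+3) + 1 := by
        rw [hp', Nat.add_div_right _ hK]
      omega
    · omega
    · omega
    · have hrr : p % (2*m+3) = p' % (2*m+3) := by omega
      have hstep := hdvd_step hrr
      have hp' : p' = p + (2*m+3) := by omega
      have : p' / (2*m+3) = p / (2*m+3) + 1 := by
        rw [hp', Nat.add_div_right _ hK]
      omega

end Exist1

section Exist2
open Finset

lemma parity_count (r : ℕ) : ∀ (t a : ℕ),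
    ((Ico a (a+t)).filter (fun p => (p + r) % 2 = 0)).card ≤ (t+1)/2 := by
  intro t
  induction t using Nat.strong_induction_on with
  | _ t ih =>
    intro a
    match t with
    | 0 => simp
    | 1 =>
      have he : Ico a (a+1) = {a} := by ext p; rw [mem_Ico, mem_singleton]; omega
      rw [he]
      have h := card_filter_le ({a} : Finset ℕ) (fun p => (p + r) % 2 = 0)
      simp only [card_singleton] at h
      omega
    | (t+2) =>
      have hsplit : Ico a (a+(t+2)) = insert (a+t) (insert (a+t+1) (Ico a (a+t))) := by
        ext p; simp [mem_Ico, mem_insert]; omega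
      rw [hsplit, filter_insert, filter_insert]
      have hIH := ih t (by omega) a
      by_cases h1 : (a+t+r) % 2 = 0
      · have h2 : ¬ ((a+t+1+r) % 2 = 0) := by omega
        rw [if_pos h1, if_neg h2]
        calc (insert (a+t) ((Ico a (a+t)).filter (fun p => (p + r) % 2 = 0))).card
            ≤ ((Ico a (a+t)).filter (fun p => (p + r) % 2 = 0)).card + 1 := card_insert_le _ _
        _ ≤ (t+1)/2 + 1 := by omega
        _ ≤ (t+2+1)/2 := by omega
      · have h2 : (a+t+1+r) % 2 = 0 := by omega
        rw [if_neg h1, if_pos h2]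
        calc (insert (a+t+1) ((Ico a (a+t)).filter (fun p => (p + r) % 2 = 0))).card
            ≤ ((Ico a (a+t)).filter (fun p => (p + r) % 2 = 0)).card + 1 := card_insert_le _ _
        _ ≤ (t+1)/2 + 1 := by omega
        _ ≤ (t+2+1)/2 := by omega

lemma mod_window {K D p : ℕ} (hdvd : K ∣ D) (h1 : D ≤ p) (h2 : p < D + K) :
    p % K = p - D := by
  obtain ⟨j, rfl⟩ := hdvd
  have hK : 0 < K := by
    rcases Nat.eq_zero_or_pos K with h | h
    · subst h; omega
    · exact h
  calc p % K = ((p - K*j) + K*j) % K := by rw [Nat.sub_add_cancel h1]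
  _ = (p - K*j) % K := Nat.add_mul_mod_self_left _ _ _
  _ = p - K*j := Nat.mod_eq_of_lt (by omega)

lemma evens_interval (m s t : ℕ) (ht : t ≤ 2*m+3) :
    ((Ico s (s+t)).filter (fun p => p % (2*m+3) % 2 = 0)).card ≤ t/2 + 1 := by
  set K := 2*m+3 with hKdef
  have hK : 0 < K := by omega
  set B := K * (s / K) + K with hB
  have hdm := Nat.div_add_mod s K
  have hmlt : s % K < K := Nat.mod_lt _ hK
  have hsB : s < B := by rw [hB]; omega
  have hBs : B ≤ s + K := by rw [hB]; omega
  have hdvdB : K ∣ B := ⟨s / K + 1, by rw [hB]; ring⟩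
  have hdvdD : K ∣ K * (s / K) := Dvd.intro _ rfl
  rcases le_or_gt (s+t) B with hcase | hcase
  · -- no wrap
    have hcong : ∀ p ∈ Ico s (s+t), (p % K % 2 = 0) ↔ ((p + K*(s/K)) % 2 = 0) := by
      intro p hp
      rw [mem_Ico] at hp
      have hmw : p % K = p - K*(s/K) := mod_window hdvdD (by omega) (by omega)
      rw [hmw]
      have : (p - K*(s/K)) % 2 = (p + K*(s/K)) % 2 := by omega
      omega
    rw [filter_congr hcong]
    calc ((Ico s (s+t)).filter (fun p => (p + K*(s/K)) % 2 = 0)).card ≤ (t+1)/2 :=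
      parity_count (K*(s/K)) t s
    _ ≤ t/2 + 1 := by omega
  · -- wrap at B
    have hsplit : Ico s (s+t) = Ico s B ∪ Ico B (s+t) :=
      (Finset.Ico_union_Ico_eq_Ico (by omega) (by omega)).symm
    rw [hsplit, filter_union]
    have hdisj : Disjoint ((Ico s B).filter (fun p => p % K % 2 = 0))
        ((Ico B (s+t)).filter (fun p => p % K % 2 = 0)) :=
      disjoint_filter_filter (Finset.Ico_disjoint_Ico_consecutive s B (s+t))
    rw [card_union_of_disjoint hdisj]
    have hpart1 : ((Ico s B).filter (fun p => p % K % 2 = 0)).card ≤ (B - s + 1)/2 := by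
      have hcong : ∀ p ∈ Ico s B, (p % K % 2 = 0) ↔ ((p + K*(s/K)) % 2 = 0) := by
        intro p hp
        rw [mem_Ico] at hp
        have hmw : p % K = p - K*(s/K) := mod_window hdvdD (by omega) (by omega)
        rw [hmw]
        have : (p - K*(s/K)) % 2 = (p + K*(s/K)) % 2 := by omega
        omega
      rw [filter_congr hcong]
      have := parity_count (K*(s/K)) (B - s) s
      rw [show s + (B - s) = B from by omega] at this
      exact this
    have hpart2 : ((Ico B (s+t)).filter (fun p => p % K % 2 = 0)).card ≤ (s + t - B + 1)/2 := by
      have hcong : ∀ p ∈ Ico B (s+t), (p % K % 2 = 0) ↔ ((p + B) % 2 = 0) := by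
        intro p hp
        rw [mem_Ico] at hp
        have hmw : p % K = p - B := mod_window hdvdB (by omega) (by omega)
        rw [hmw]
        have : (p - B) % 2 = (p + B) % 2 := by omega
        omega
      rw [filter_congr hcong]
      have := parity_count B (s + t - B) B
      rw [show B + (s + t - B) = s + t from by omega] at this
      exact this
    omega

end Exist2

section Exist3
open Finset

def occF (m : ℕ) (p : ℕ) : Fin (3*m+4) := ⟨occf m p, occf_lt m p⟩

def icnt (m : ℕ) (c : Fin (3*m+4)) (s t : ℕ) : ℕ :=
  ((Ico s (s+t)).filter (fun p => occF m p = c)).card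

lemma icnt_sum (m s t : ℕ) : ∑ c, icnt m c s t = t := by
  unfold icnt
  have := (Finset.card_eq_sum_card_fiberwise
    (f := occF m) (s := Ico s (s+t)) (t := univ) (fun p _ => mem_univ _)).symm
  rw [this, Nat.card_Ico]
  omega

lemma occF_inj_short {m : ℕ} {p p' : ℕ} (h : occF m p = occF m p') (hlt : p < p')
    (hsm : p' - p < 2*m+3) : False := by
  have h2 : occf m p = occf m p' := by
    have := congrArg Fin.val h
    simpa [occF] using this
  have := occf_collide h2 hlt (by omega)
  omega

lemma delta_eq (m s t : ℕ) (ht : t ≤ 2*m+3) :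
    (univ.filter (fun c : Fin (3*m+4) => Odd (icnt m c s t))).card = t := by
  have hinj : ∀ p ∈ Ico s (s+t), ∀ p' ∈ Ico s (s+t), occF m p = occF m p' → p = p' := by
    intro p hp p' hp' he
    rw [mem_Ico] at hp hp'
    rcases lt_trichotomy p p' with h | h | h
    · exact absurd (occF_inj_short he h (by omega)) (by simp)
    · exact h
    · exact absurd (occF_inj_short he.symm h (by omega)) (by simp)
  have himg : (univ.filter (fun c : Fin (3*m+4) => Odd (icnt m c s t)))
      = (Ico s (s+t)).image (occF m) := by
    ext c
    simp only [mem_filter, mem_univ, true_and, mem_image]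
    constructor
    · intro hodd
      have hpos : 0 < icnt m c s t := by rcases hodd with ⟨w, hw⟩; omega
      rw [icnt, card_pos] at hpos
      obtain ⟨p, hp⟩ := hpos
      rw [mem_filter] at hp
      exact ⟨p, hp.1, hp.2⟩
    · rintro ⟨p, hp, rfl⟩
      have hfib : (Ico s (s+t)).filter (fun q => occF m q = occF m p) = {p} := by
        ext q
        simp only [mem_filter, mem_singleton]
        constructor
        · rintro ⟨hq, he⟩
          exact hinj q hq p hp he
        · rintro rfl
          exact ⟨hp, rfl⟩
      rw [icnt, hfib]
      simp
  rw [himg, card_image_of_injOn (fun p hp q hq he => hinj p hp q hq he), Nat.card_Ico]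
  omega

lemma icnt_le2 {m s t : ℕ} (ht : t ≤ 2*(2*m+3)) (c : Fin (3*m+4)) :
    icnt m c s t ≤ 2 := by
  by_contra hgt
  push_neg at hgt
  rw [icnt] at hgt
  obtain ⟨a, b, c3, ha, hb, hc3, hab, hac, hbc⟩ := Finset.two_lt_card_iff.mp hgt
  rw [mem_filter, mem_Ico] at ha hb hc3
  have key : ∀ u w : ℕ, s ≤ u → u < s + t → s ≤ w → w < s + t →
      occF m u = occF m w → u < w → w - u = 2*m+3 := by
    intro u w hu1 hu2 hw1 hw2 he huw
    have h2 : occf m u = occf m w := by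
      have := congrArg Fin.val he
      simpa [occF] using this
    exact (occf_collide h2 huw (by omega)).1
  have key2 : ∀ u w : ℕ, s ≤ u → u < s + t → s ≤ w → w < s + t →
      occF m u = occF m w → u ≠ w → w - u = 2*m+3 ∨ u - w = 2*m+3 := by
    intro u w hu1 hu2 hw1 hw2 he hne
    rcases lt_or_gt_of_ne hne with h | h
    · exact Or.inl (key u w hu1 hu2 hw1 hw2 he h)
    · exact Or.inr (key w u hw1 hw2 hu1 hu2 he.symm h)
  have e1 : occF m a = occF m b := by rw [ha.2, hb.2]
  have e2 : occF m a = occF m c3 := by rw [ha.2, hc3.2]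
  have e3 : occF m b = occF m c3 := by rw [hb.2, hc3.2]
  have k1 := key2 a b ha.1.1 ha.1.2 hb.1.1 hb.1.2 e1 hab
  have k2 := key2 a c3 ha.1.1 ha.1.2 hc3.1.1 hc3.1.2 e2 hac
  have k3 := key2 b c3 hb.1.1 hb.1.2 hc3.1.1 hc3.1.2 e3 hbc
  have := ha.1; have := hb.1; have := hc3.1
  omega

lemma count2_bound (m s t : ℕ) (hK : 2*m+3 < t) (ht : t ≤ 2*(2*m+3)) :
    (univ.filter (fun c : Fin (3*m+4) => icnt m c s t = 2)).card ≤ (t - (2*m+3))/2 + 1 := by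
  have hmap : ∀ c : Fin (3*m+4), ∃ p : ℕ, icnt m c s t = 2 →
      (p ∈ (Ico s (s + (t - (2*m+3)))).filter (fun p => p % (2*m+3) % 2 = 0) ∧
        occF m p = c) := by
    intro c
    by_cases hc : icnt m c s t = 2
    swap
    · exact ⟨0, fun h => absurd h hc⟩
    obtain ⟨a, b, hab, hset⟩ := Finset.card_eq_two.mp hc
    have haS : a ∈ (Ico s (s+t)).filter (fun p => occF m p = c) := by rw [hset]; simp
    have hbS : b ∈ (Ico s (s+t)).filter (fun p => occF m p = c) := by rw [hset]; simp
    rw [mem_filter, mem_Ico] at haS hbS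
    rcases lt_or_gt_of_ne hab with hlt | hlt
    · have he : occf m a = occf m b := by
        have h0 : occF m a = occF m b := by rw [haS.2, hbS.2]
        have := congrArg Fin.val h0
        simpa [occF] using this
      obtain ⟨hgap, heven⟩ := occf_collide he hlt (by omega)
      refine ⟨a, fun _ => ⟨?_, haS.2⟩⟩
      rw [mem_filter, mem_Ico]
      exact ⟨⟨haS.1.1, by omega⟩, heven⟩
    · have he : occf m b = occf m a := by
        have h0 : occF m b = occF m a := by rw [haS.2, hbS.2]
        have := congrArg Fin.val h0
        simpa [occF] using this
      obtain ⟨hgap, heven⟩ := occf_collide he hlt (by omega)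
      refine ⟨b, fun _ => ⟨?_, hbS.2⟩⟩
      rw [mem_filter, mem_Ico]
      exact ⟨⟨hbS.1.1, by omega⟩, heven⟩
  classical
  choose pf hpf using hmap
  have hcardle : (univ.filter (fun c : Fin (3*m+4) => icnt m c s t = 2)).card
      ≤ ((Ico s (s + (t - (2*m+3)))).filter (fun p => p % (2*m+3) % 2 = 0)).card := by
    apply Finset.card_le_card_of_injOn pf
    · intro c hc
      rw [Finset.mem_coe, mem_filter] at hc
      exact (hpf c hc.2).1
    · intro c1 h1 c2 h2 he
      rw [Finset.mem_coe, mem_filter] at h1 h2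
      rw [← (hpf c1 h1.2).2, ← (hpf c2 h2.2).2, he]
  calc (univ.filter (fun c : Fin (3*m+4) => icnt m c s t = 2)).card
      ≤ ((Ico s (s + (t - (2*m+3)))).filter (fun p => p % (2*m+3) % 2 = 0)).card := hcardle
  _ ≤ (t - (2*m+3))/2 + 1 := evens_interval m s (t - (2*m+3)) (by omega)

lemma delta_ge (m s t : ℕ) (h1 : 1 ≤ t) (h2 : t ≤ 2*(2*m+3)) :
    min t (2*m+1) ≤ (univ.filter (fun c : Fin (3*m+4) => Odd (icnt m c s t))).card := by
  rcases le_or_gt t (2*m+3) with hc | hc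
  · rw [delta_eq m s t hc]
    omega
  · have hsum := icnt_sum m s t
    have hodd1 : (univ.filter (fun c : Fin (3*m+4) => Odd (icnt m c s t)))
        = (univ.filter (fun c : Fin (3*m+4) => icnt m c s t = 1)) := by
      apply filter_congr
      intro c _
      have hle := icnt_le2 (s := s) h2 c
      have hiff : ∀ n : ℕ, n ≤ 2 → (Odd n ↔ n = 1) := by decide
      exact iff_iff_eq.mp (hiff _ hle) ▸ Iff.rfl
    have hpt : ∀ n : ℕ, n ≤ 2 → n = (if n = 1 then 1 else 0) + 2*(if n = 2 then 1 else 0) := by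
      decide
    have hsplit : ∑ c, icnt m c s t
        = (univ.filter fun c : Fin (3*m+4) => icnt m c s t = 1).card
          + 2 * (univ.filter fun c : Fin (3*m+4) => icnt m c s t = 2).card := by
      rw [card_filter, card_filter, Finset.mul_sum, ← Finset.sum_add_distrib]
      apply Finset.sum_congr rfl
      intro c _
      exact hpt _ (icnt_le2 (s := s) h2 c)
    have h2c := count2_bound m s t hc h2
    rw [hodd1]
    omega

end Exist3

section Exist4
open Finset

def pcnt (m : ℕ) (c : Fin (3*m+4)) (i : ℕ) : ℕ :=
  ((range i).filter (fun p => occF m p = c)).card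

noncomputable def xcode (m : ℕ) : ZMod (8*m+12) → Fin (3*m+4) → Bool :=
  fun i c => decide (Odd (pcnt m c i.val))

lemma pcnt_split (m : ℕ) (c : Fin (3*m+4)) {a b : ℕ} (h : a ≤ b) :
    pcnt m c b = pcnt m c a + icnt m c a (b - a) := by
  unfold pcnt icnt
  rw [show a + (b - a) = b from by omega]
  simp only [range_eq_Ico]
  rw [← Finset.Ico_union_Ico_eq_Ico (Nat.zero_le a) h,
    filter_union, card_union_of_disjoint
      (disjoint_filter_filter (Finset.Ico_disjoint_Ico_consecutive 0 a b))]

lemma icnt_shift2K (m : ℕ) (c : Fin (3*m+4)) (a t : ℕ) :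
    icnt m c (a + 2*(2*m+3)) t = icnt m c a t := by
  unfold icnt
  apply Finset.card_bij (fun p _ => p - 2*(2*m+3))
  · intro p hp
    rw [mem_filter, mem_Ico] at hp ⊢
    have h1 : 2*(2*m+3) ≤ p := by omega
    refine ⟨by omega, ?_⟩
    rw [← hp.2]
    have := occf_2K m (p - 2*(2*m+3))
    rw [show p - 2*(2*m+3) + 2*(2*m+3) = p from by omega] at this
    unfold occF
    exact Fin.ext this.symm
  · intro p hp q hq h
    rw [mem_filter, mem_Ico] at hp hq
    omega
  · intro q hq
    rw [mem_filter, mem_Ico] at hq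
    refine ⟨q + 2*(2*m+3), ?_, by omega⟩
    rw [mem_filter, mem_Ico]
    refine ⟨by omega, ?_⟩
    rw [← hq.2]
    unfold occF
    exact Fin.ext (occf_2K m q)

lemma icnt_split (m : ℕ) (c : Fin (3*m+4)) (a t1 t2 : ℕ) :
    icnt m c a (t1 + t2) = icnt m c a t1 + icnt m c (a + t1) t2 := by
  unfold icnt
  rw [show a + (t1 + t2) = (a + t1) + t2 from by ring]
  rw [← Finset.Ico_union_Ico_eq_Ico (a := a) (b := a + t1) (c := a + t1 + t2)
      (by omega) (by omega),
    filter_union, card_union_of_disjoint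
      (disjoint_filter_filter (Finset.Ico_disjoint_Ico_consecutive a (a + t1) (a + t1 + t2)))]

lemma icnt_period_even (m : ℕ) (c : Fin (3*m+4)) (a : ℕ) :
    icnt m c a (8*m+12) % 2 = 0 := by
  have hsplit : icnt m c a (8*m+12) = icnt m c a (4*m+6) + icnt m c (a + (4*m+6)) (4*m+6) := by
    have h := icnt_split m c a (4*m+6) (4*m+6)
    rw [show (4*m+6) + (4*m+6) = 8*m+12 from by ring] at h
    exact h
  have hshift : icnt m c (a + (4*m+6)) (4*m+6) = icnt m c a (4*m+6) := by
    rw [show a + (4*m+6) = a + 2*(2*m+3) from by ring, icnt_shift2K]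
  omega

lemma ham_formula (m : ℕ) (i j : ZMod (8*m+12)) (h : i.val ≤ j.val) :
    hammingDist (xcode m i) (xcode m j)
      = (univ.filter (fun c : Fin (3*m+4) => Odd (icnt m c i.val (j.val - i.val)))).card := by
  show (univ.filter fun c => xcode m i c ≠ xcode m j c).card = _
  congr 1
  ext c
  simp only [mem_filter, mem_univ, true_and]
  unfold xcode
  rw [ne_eq, decide_eq_decide]
  have hs := pcnt_split m c h
  rw [Nat.odd_iff, Nat.odd_iff, Nat.odd_iff] at *
  omega

lemma ham_compl (m : ℕ) (i j : ZMod (8*m+12)) (h : i.val ≤ j.val) :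
    (univ.filter (fun c : Fin (3*m+4) => Odd (icnt m c i.val (j.val - i.val)))).card
    = (univ.filter (fun c : Fin (3*m+4) =>
        Odd (icnt m c j.val ((8*m+12) - (j.val - i.val))))).card := by
  congr 1
  apply filter_congr
  intro c _
  have hjlt : j.val < 8*m+12 := ZMod.val_lt j
  have hsplit : icnt m c i.val (8*m+12)
      = icnt m c i.val (j.val - i.val) + icnt m c j.val ((8*m+12) - (j.val - i.val)) := by
    have hh := icnt_split m c i.val (j.val - i.val) ((8*m+12) - (j.val - i.val))
    rw [show (j.val - i.val) + ((8*m+12) - (j.val - i.val)) = 8*m+12 from by omega,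
      show i.val + (j.val - i.val) = j.val from by omega] at hh
    exact hh
  have hev := icnt_period_even m c i.val
  rw [Nat.odd_iff, Nat.odd_iff]
  omega

lemma ham_compl' (m : ℕ) (i j : ZMod (8*m+12)) (h : i.val ≤ j.val) {m1 : ℕ}
    (hm1 : m1 = j.val - i.val) :
    (univ.filter (fun c : Fin (3*m+4) => Odd (icnt m c i.val m1))).card
    = (univ.filter (fun c : Fin (3*m+4) => Odd (icnt m c j.val ((8*m+12) - m1)))).card := by
  rw [hm1]
  exact ham_compl m i j h

lemma spread_main (m : ℕ) (i j : ZMod (8*m+12)) :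
    min (cycDist i j) (2*m+1) ≤ hammingDist (xcode m i) (xcode m j) := by
  rcases eq_or_ne i j with rfl | hne
  · have : cycDist i i = 0 := by unfold cycDist; simp
    simp [this]
  -- wlog val i ≤ val j
  have main : ∀ i j : ZMod (8*m+12), i ≠ j → i.val ≤ j.val →
      min (cycDist i j) (2*m+1) ≤ hammingDist (xcode m i) (xcode m j) := by
    intro i j hne h
    have hjlt : j.val < 8*m+12 := ZMod.val_lt j
    set m1 := j.val - i.val with hm1
    have hm1pos : 0 < m1 := by
      rcases Nat.lt_or_ge i.val j.val with h' | h'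
      · omega
      · exfalso
        exact hne (ZMod.val_injective _ (by omega))
    have hcyc : cycDist i j = min ((8*m+12) - m1) m1 := by
      unfold cycDist
      have h1 : (j - i).val = m1 := by rw [ZMod.val_sub h, hm1]
      have h2 : (i - j).val = (8*m+12) - m1 := by
        have hij : i - j = -(j - i) := by ring
        rw [hij, ZMod.neg_val]
        have : j - i ≠ 0 := by
          intro h0
          exact hne (sub_eq_zero.mp h0).symm
        rw [if_neg this, h1]
      rw [h1, h2]
    rw [ham_formula m i j h, ← hm1]
    rcases le_or_gt m1 (2*(2*m+3)) with hcase | hcase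
    · have := delta_ge m i.val m1 (by omega) hcase
      omega
    · rw [ham_compl' m i j h hm1]
      have := delta_ge m j.val ((8*m+12) - m1) (by omega) (by omega)
      omega
  rcases le_total i.val j.val with h | h
  · exact main i j hne h
  · have := main j i (Ne.symm hne) h
    rw [hammingDist_comm] at this
    have hcyc : cycDist i j = cycDist j i := by unfold cycDist; omega
    rw [hcyc]
    exact this

lemma adj_main (m : ℕ) (i : ZMod (8*m+12)) :
    hammingDist (xcode m i) (xcode m (i + 1)) = 1 := by
  have hvlt : i.val < 8*m+12 := ZMod.val_lt i
  rcases Nat.lt_or_ge (i.val + 1) (8*m+12) with hc | hc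
  · have hval : (i + 1).val = i.val + 1 := by
      have h1 : i + 1 = ((i.val + 1 : ℕ) : ZMod (8*m+12)) := by
        push_cast
        rw [ZMod.natCast_val, ZMod.cast_id]
      rw [h1, ZMod.val_natCast_of_lt hc]
    rw [ham_formula m i (i+1) (by omega), hval,
      show i.val + 1 - i.val = 1 from by omega]
    exact delta_eq m i.val 1 (by omega)
  · -- wrap-around : i.val = 8m+11, i + 1 = 0
    have hval : i.val = 8*m+11 := by omega
    have hzero : (i + 1) = 0 := by
      have h1 : i = ((8*m+11 : ℕ) : ZMod (8*m+12)) := by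
        rw [← hval, ZMod.natCast_val, ZMod.cast_id]
      rw [h1]
      have h2 : ((8*m+11 : ℕ) : ZMod (8*m+12)) + 1 = ((8*m+12 : ℕ) : ZMod (8*m+12)) := by
        push_cast
        ring
      rw [h2, ZMod.natCast_self]
    rw [hammingDist_comm, hzero]
    have hle : (0 : ZMod (8*m+12)).val ≤ i.val := by simp
    rw [ham_formula m 0 i hle, ham_compl m 0 i hle]
    have hv0 : (0 : ZMod (8*m+12)).val = 0 := ZMod.val_zero
    rw [hv0, hval, show 8*m+12 - (8*m+11 - 0) = 1 from by omega]
    exact delta_eq m (8*m+11) 1 (by omega)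

theorem exists_code (m : ℕ) :
    IsCircuitCode (3*m+4) (2*m+1) (8*m+12) (xcode m) := by
  constructor
  · intro i j hxy
    by_contra hne
    have hs := spread_main m i j
    have hcyc : 1 ≤ cycDist i j := by
      unfold cycDist
      have h1 : i - j ≠ 0 := fun h0 => hne (sub_eq_zero.mp h0)
      have h2 : j - i ≠ 0 := fun h0 => hne (sub_eq_zero.mp h0).symm
      have v1 : (i - j).val ≠ 0 := fun hv => h1 ((ZMod.val_eq_zero _).mp hv)
      have v2 : (j - i).val ≠ 0 := fun hv => h2 ((ZMod.val_eq_zero _).mp hv)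
      omega
    rw [hxy] at hs
    simp [hammingDist_self] at hs
    omega
  · intro i
    exact adj_main m i
  · intro i j
    rw [hyper_dist]
    exact spread_main m i j

end Exist4

/-- Douglas, Theorem 5: for odd `k ≥ 9` and `d = (3k+5)/2`,
the maximum length of a `(d,k)` circuit code is `K(d,k) = 4k+8`. -/
theorem stmt_3 (k d : ℕ) (hk : Odd k) (hk9 : 9 ≤ k) (hd : 2 * d = 3 * k + 5) :
    (∃ x : ZMod (4 * k + 8) → Fin d → Bool, IsCircuitCode d k (4 * k + 8) x) ∧
      ∀ (N : ℕ) (x : ZMod N → Fin d → Bool), IsCircuitCode d k N x → N ≤ 4 * k + 8 := by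
  obtain ⟨m, hm⟩ := hk
  have hkm : k = 2*m+1 := by omega
  subst hkm
  have hdm : d = 3*m+4 := by omega
  subst hdm
  constructor
  · rw [show 4*(2*m+1)+8 = 8*m+12 from by ring]
    exact ⟨xcode m, exists_code m⟩
  · intro N x hc
    exact upper_bound (by omega) hk9 hd x hc
end

section
/- Let k be an even integer with k ≥ 4 and let d = (3k+4)/2. Then the maximum length of a symmetric (d,k) circuit code is 4k+6. -/
open Finset

namespace CC

variable {d N : ℕ}

/-- number of occurrences of coordinate `c` in the window `[t, t+L)` of `τ`. -/
def cnt (τ : ZMod N → Fin d) (c : Fin d) (t : ZMod N) (L : ℕ) : ℕ :=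
  ((Finset.range L).filter fun j => τ (t + (j : ℕ)) = c).card

/-- number of coordinates appearing an odd number of times in window `[t,t+L)`. -/
def dlt (τ : ZMod N → Fin d) (t : ZMod N) (L : ℕ) : ℕ :=
  ((Finset.univ : Finset (Fin d)).filter fun c => Odd (cnt τ c t L)).card

variable {τ : ZMod N → Fin d}

lemma cnt_zero (c : Fin d) (t : ZMod N) : cnt τ c t 0 = 0 := by simp [cnt]

lemma cnt_succ (c : Fin d) (t : ZMod N) (L : ℕ) :
    cnt τ c t (L + 1) = cnt τ c t L + if τ (t + (L : ℕ)) = c then 1 else 0 := by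
  unfold cnt
  rw [Finset.range_add_one, Finset.filter_insert]
  split
  · rw [Finset.card_insert_of_notMem (by simp)]
  · simp

lemma cnt_le (c : Fin d) (t : ZMod N) (L : ℕ) : cnt τ c t L ≤ L := by
  refine le_trans (Finset.card_filter_le _ _) (by simp)

lemma cnt_add (c : Fin d) (t : ZMod N) (L₁ L₂ : ℕ) :
    cnt τ c t (L₁ + L₂) = cnt τ c t L₁ + cnt τ c (t + (L₁ : ℕ)) L₂ := by
  induction L₂ with
  | zero => simp [cnt_zero]
  | succ L₂ ih =>
    have h : (t + (L₁ : ℕ)) + ((L₂ : ℕ) : ZMod N) = t + ((L₁ + L₂ : ℕ) : ZMod N) := by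
      push_cast; ring
    rw [← Nat.add_assoc, cnt_succ, cnt_succ, ih, h, Nat.add_assoc]

lemma sum_cnt (t : ZMod N) (L : ℕ) : ∑ c : Fin d, cnt τ c t L = L := by
  induction L with
  | zero => simp [cnt_zero]
  | succ L ih =>
    simp only [cnt_succ, Finset.sum_add_distrib, ih]
    simp [Finset.sum_ite_eq]

variable {x : ZMod N → Fin d → Bool}

lemma flip_iff (hτ : IsTransitionSeq x τ) (t : ZMod N) (L : ℕ) (c : Fin d) :
    (x (t + (L : ℕ)) c ≠ x t c) ↔ Odd (cnt τ c t L) := by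
  induction L with
  | zero => simp [cnt_zero]
  | succ L ih =>
    have h1 : t + ((L + 1 : ℕ) : ZMod N) = (t + ((L : ℕ) : ZMod N)) + 1 := by
      push_cast; ring
    have h2 := hτ (t + ((L : ℕ) : ZMod N)) c
    rw [h1, cnt_succ]
    by_cases hc : τ (t + ((L : ℕ) : ZMod N)) = c
    · have h3 : x ((t + ((L : ℕ) : ZMod N)) + 1) c ≠ x (t + ((L : ℕ) : ZMod N)) c := h2.mpr hc.symm
      rw [if_pos hc, Nat.odd_add_one, ← ih]
      revert h3
      cases x ((t + ((L : ℕ) : ZMod N)) + 1) c <;> cases x (t + ((L : ℕ) : ZMod N)) c <;>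
        cases x t c <;> simp
    · have h3 : x ((t + ((L : ℕ) : ZMod N)) + 1) c = x (t + ((L : ℕ) : ZMod N)) c := by
        by_contra hne
        exact hc (h2.mp hne).symm
      rw [if_neg hc, Nat.add_zero, h3]
      exact ih


lemma ham_eq (hτ : IsTransitionSeq x τ) (t : ZMod N) (L : ℕ) :
    hammingDist (x t) (x (t + (L : ℕ))) = dlt τ t L := by
  unfold hammingDist dlt
  apply Finset.card_bij (fun c _ => c)
  · intro c hc
    simp only [Finset.mem_filter, Finset.mem_univ, true_and] at *
    exact (flip_iff hτ t L c).mp (Ne.symm hc)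
  · intro a b _ _ h; exact h
  · intro c hc
    refine ⟨c, ?_, rfl⟩
    simp only [Finset.mem_filter, Finset.mem_univ, true_and] at *
    exact Ne.symm ((flip_iff hτ t L c).mpr hc)

/-- graph distance in the hypercube equals Hamming distance -/
lemma hypercube_dist (a b : Fin d → Bool) : (hypercube d).dist a b = hammingDist a b := by
  classical
  -- first: any walk has length ≥ hammingDist
  have hlow : ∀ (u v : Fin d → Bool) (w : (hypercube d).Walk u v), hammingDist u v ≤ w.length := by
    intro u v w
    induction w with
    | nil => simp
    | cons h q ih =>
      rename_i a' b' c' 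
      calc hammingDist a' c' ≤ hammingDist a' b' + hammingDist b' c' := hammingDist_triangle _ _ _
        _ ≤ 1 + q.length := by
            have : hammingDist a' b' = 1 := h
            omega
        _ = (SimpleGraph.Walk.cons h q).length := by simp [SimpleGraph.Walk.length_cons]; omega
  -- existence of a walk of length hammingDist
  have hup : ∀ (n : ℕ) (u v : Fin d → Bool), hammingDist u v = n →
      ∃ w : (hypercube d).Walk u v, w.length = n := by
    intro n
    induction n with
    | zero =>
      intro u v h
      rw [hammingDist_eq_zero] at h
      subst h
      exact ⟨SimpleGraph.Walk.nil, rfl⟩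
    | succ n ih =>
      intro u v h
      have hne : ∃ i, u i ≠ v i := by
        by_contra hno
        push_neg at hno
        have : u = v := funext hno
        subst this
        simp at h
      obtain ⟨i, hi⟩ := hne
      set u' := Function.update u i (v i) with hu'
      have hd1 : hammingDist u u' = 1 := by
        rw [hammingDist]
        rw [Finset.card_eq_one]
        refine ⟨i, ?_⟩
        ext j
        by_cases hj : j = i
        · subst hj; simp [hu', Function.update, hi]
        · simp [hu', Function.update, hj]
      have hd2 : hammingDist u' v = n := by
        have : hammingDist u v = (Finset.univ.filter fun j => u j ≠ v j).card := rfl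
        have h2 : hammingDist u' v = (Finset.univ.filter fun j => u' j ≠ v j).card := rfl
        have hset : (Finset.univ.filter fun j => u' j ≠ v j) =
            (Finset.univ.filter fun j => u j ≠ v j).erase i := by
          ext j
          by_cases hj : j = i
          · subst hj; simp [hu', Function.update]
          · simp [hu', Function.update, hj, Finset.mem_erase]
        rw [h2, hset, Finset.card_erase_of_mem (by simp [hi]), ← this, h]
        simp
      obtain ⟨w, hw⟩ := ih u' v hd2
      exact ⟨SimpleGraph.Walk.cons (show (hypercube d).Adj u u' from hd1) w, by simp [hw]⟩
  obtain ⟨w, hw⟩ := hup (hammingDist a b) a b rfl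
  have hreach : (hypercube d).Reachable a b := ⟨w⟩
  obtain ⟨w', hw'⟩ := hreach.exists_walk_length_eq_dist
  have h1 : (hypercube d).dist a b ≤ hammingDist a b := by
    rw [← hw]; exact SimpleGraph.dist_le w
  have h2 : hammingDist a b ≤ (hypercube d).dist a b := by
    rw [← hw']; exact hlow a b w'
  omega

variable [NeZero N]

lemma spread_dlt {k : ℕ} (hC : IsCircuitCode d k N x) (hτ : IsTransitionSeq x τ)
    (t : ZMod N) (L : ℕ) (hL : L < N) : min (min L (N - L)) k ≤ dlt τ t L := by
  rcases Nat.eq_zero_or_pos L with h0 | hpos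
  · subst h0; simp
  have hspread := hC.spread t (t + (L : ℕ))
  have hv : ((L : ZMod N)).val = L := ZMod.val_natCast_of_lt hL
  have hne0 : (L : ZMod N) ≠ 0 := by
    intro h
    rw [← hv] at hpos
    rw [h] at hpos
    simp [ZMod.val_zero] at hpos
  have hcyc : cycDist t (t + (L : ℕ)) = min (N - L) L := by
    unfold cycDist
    have e1 : t - (t + (L : ℕ)) = -(L : ZMod N) := by ring
    have e2 : (t + (L : ℕ)) - t = (L : ZMod N) := by ring
    rw [e1, e2, hv, ZMod.neg_val, if_neg hne0, hv]
  rw [hcyc] at hspread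
  have hham := ham_eq hτ t L
  rw [hypercube_dist, hham] at hspread
  omega

/-- two equal transitions cannot be at distance `1..k` apart. -/
lemma gap {k : ℕ} (hC : IsCircuitCode d k N x) (hτ : IsTransitionSeq x τ)
    (hN : 2 * k + 2 ≤ N) :
    ∀ (g : ℕ) (t : ZMod N), 1 ≤ g → g ≤ k → τ (t + (g : ℕ)) ≠ τ t := by
  intro g
  induction g using Nat.strong_induction_on with
  | _ g ih =>
    intro t hg1 hgk heq
    set c := τ t with hc
    -- occurrences of c in [t, t+g+1) are exactly offsets 0 and g
    have hmid : ∀ j, 1 ≤ j → j < g → τ (t + (j : ℕ)) ≠ c := by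
      intro j hj1 hjg
      exact ih j hjg t hj1 (le_trans (le_of_lt hjg) hgk)
    have hcnt : cnt τ c t (g + 1) = 2 := by
      have : ((Finset.range (g+1)).filter fun j => τ (t + (j : ℕ)) = c) = {0, g} := by
        ext j
        simp only [Finset.mem_filter, Finset.mem_range, Finset.mem_insert, Finset.mem_singleton]
        constructor
        · rintro ⟨hjr, hje⟩
          by_contra hcon
          push_neg at hcon
          obtain ⟨hj0, hjg⟩ := hcon
          exact hmid j (Nat.one_le_iff_ne_zero.mpr hj0) (by omega) hje
        · rintro (rfl | rfl)
          · simpa using hc.symm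
          · exact ⟨by omega, heq⟩
      rw [cnt, this]
      rw [Finset.card_insert_of_notMem (by simp; omega)]
      simp
    -- dlt ≤ g - 1
    have hdle : dlt τ t (g + 1) + 2 ≤ g + 1 := by
      have hsub : (Finset.univ.filter fun c' => Odd (cnt τ c' t (g+1))) ⊆ Finset.univ.erase c := by
        intro c' hc'
        simp only [Finset.mem_filter] at hc'
        simp only [Finset.mem_erase, Finset.mem_univ, and_true]
        intro hcc
        subst hcc
        rw [hcnt] at hc'
        exact (Nat.not_odd_iff_even.mpr (by norm_num)) hc'.2
      have h1 : dlt τ t (g+1) ≤ ∑ c' ∈ Finset.univ.erase c, cnt τ c' t (g+1) := by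
        calc dlt τ t (g+1) ≤ ∑ c' ∈ (Finset.univ.filter fun c' => Odd (cnt τ c' t (g+1))), cnt τ c' t (g+1) := by
              rw [dlt, Finset.card_eq_sum_ones]
              apply Finset.sum_le_sum
              intro c' hc'
              simp only [Finset.mem_filter] at hc'
              exact hc'.2.pos
            _ ≤ ∑ c' ∈ Finset.univ.erase c, cnt τ c' t (g+1) := Finset.sum_le_sum_of_subset hsub
      have h2 : ∑ c' ∈ Finset.univ.erase c, cnt τ c' t (g+1) + cnt τ c t (g+1) = g + 1 := by
        rw [Finset.sum_erase_add _ _ (Finset.mem_univ c), sum_cnt]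
      omega
    have := spread_dlt hC hτ t (g+1) (by omega)
    omega


lemma gap_ne {k : ℕ} (hC : IsCircuitCode d k N x) (hτ : IsTransitionSeq x τ)
    (hN : 2 * k + 2 ≤ N) {j j' : ℕ} (h : j < j') (hk : j' - j ≤ k) (t : ZMod N) :
    τ (t + (j' : ℕ)) ≠ τ (t + (j : ℕ)) := by
  have hg := gap hC hτ hN (j' - j) (t + (j : ℕ)) (by omega) hk
  have hcast : (t + (j : ℕ)) + ((j' - j : ℕ) : ZMod N) = t + (j' : ℕ) := by
    rw [Nat.cast_sub h.le]; ring
  rwa [hcast] at hg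

lemma cnt_le_one {k : ℕ} (hC : IsCircuitCode d k N x) (hτ : IsTransitionSeq x τ)
    (hN : 2 * k + 2 ≤ N) {L : ℕ} (hL : L ≤ k + 1) (c : Fin d) (t : ZMod N) :
    cnt τ c t L ≤ 1 := by
  by_contra hcon
  push_neg at hcon
  obtain ⟨a, ha, b, hb, hab⟩ := Finset.one_lt_card.mp hcon
  simp only [Finset.mem_filter, Finset.mem_range] at ha hb
  rcases Nat.lt_or_ge a b with h | h
  · exact gap_ne hC hτ hN h (by omega) t (hb.2.trans ha.2.symm)
  · have h' : b < a := by omega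
    exact gap_ne hC hτ hN h' (by omega) t (ha.2.trans hb.2.symm)

lemma cnt_le_two {k : ℕ} (hC : IsCircuitCode d k N x) (hτ : IsTransitionSeq x τ)
    (hN : 2 * k + 2 ≤ N) {L : ℕ} (hL : L ≤ 2 * k + 2) (c : Fin d) (t : ZMod N) :
    cnt τ c t L ≤ 2 := by
  by_contra hcon
  push_neg at hcon
  obtain ⟨a, ha, b, hb, e, he, hab, hae, hbe⟩ := Finset.two_lt_card.mp hcon
  simp only [Finset.mem_filter, Finset.mem_range] at ha hb he
  have key : ∀ u v : ℕ, u < L → v < L → τ (t + (u : ℕ)) = c → τ (t + (v : ℕ)) = c →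
      u < v → k + 1 ≤ v - u := by
    intro u v hu hv hcu hcv huv
    by_contra hcon2
    exact gap_ne hC hτ hN huv (by omega) t (hcv.trans hcu.symm)
  have hspan : ∀ u v w : ℕ, u < L → v < L → w < L →
      τ (t + (u : ℕ)) = c → τ (t + (v : ℕ)) = c → τ (t + (w : ℕ)) = c →
      u < v → v < w → False := by
    intro u v w hu hv hw hcu hcv hcw huv hvw
    have g1 := key u v hu hv hcu hcv huv
    have g2 := key v w hv hw hcv hcw hvw
    omega
  rcases Nat.lt_trichotomy a b with h1 | h1 | h1
  · rcases Nat.lt_trichotomy b e with h2 | h2 | h2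
    · exact hspan a b e ha.1 hb.1 he.1 ha.2 hb.2 he.2 h1 h2
    · exact hbe h2
    · rcases Nat.lt_trichotomy a e with h3 | h3 | h3
      · exact hspan a e b ha.1 he.1 hb.1 ha.2 he.2 hb.2 h3 h2
      · exact hae h3
      · exact hspan e a b he.1 ha.1 hb.1 he.2 ha.2 hb.2 h3 h1
  · exact hab h1
  · rcases Nat.lt_trichotomy a e with h2 | h2 | h2
    · exact hspan b a e hb.1 ha.1 he.1 hb.2 ha.2 he.2 h1 h2
    · exact hae h2
    · rcases Nat.lt_trichotomy b e with h3 | h3 | h3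
      · exact hspan b e a hb.1 he.1 ha.1 hb.2 he.2 ha.2 h3 h2
      · exact hbe h3
      · exact hspan e b a he.1 hb.1 ha.1 he.2 hb.2 ha.2 h3 h1

/-- helper: split a filtered card by a predicate -/
lemma card_split (P Q : Fin d → Prop) [DecidablePred P] [DecidablePred Q] :
    (Finset.univ.filter Q).card =
      (Finset.univ.filter fun c : Fin d => P c ∧ Q c).card +
      (Finset.univ.filter fun c : Fin d => ¬ P c ∧ Q c).card := by
  rw [← Finset.card_filter_add_card_filter_not (s := Finset.univ.filter Q) (p := P)]
  congr 1 <;> rw [Finset.filter_filter] <;>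
    (congr 1; apply Finset.filter_congr; intro c _; constructor <;> (intro h; tauto))


section UpperAux

variable {p : ℕ}

lemma cnt_one (c : Fin d) (t : ZMod N) :
    cnt τ c t 1 = if τ t = c then 1 else 0 := by
  rw [show (1 : ℕ) = 0 + 1 by rfl, cnt_succ, cnt_zero]
  simp

lemma cnt_period (hper : ∀ t : ZMod N, τ (t + ((p : ℕ) : ZMod N)) = τ t) (c : Fin d) :
    ∀ t : ZMod N, cnt τ c t p = cnt τ c 0 p := by
  have step : ∀ t : ZMod N, cnt τ c (t + 1) p = cnt τ c t p := by
    intro t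
    have h1 : cnt τ c t (p + 1) = cnt τ c t p + if τ (t + ((p:ℕ) : ZMod N)) = c then 1 else 0 :=
      cnt_succ c t p
    have h2 : cnt τ c t (1 + p) = cnt τ c t 1 + cnt τ c (t + ((1:ℕ) : ZMod N)) p :=
      cnt_add c t 1 p
    rw [hper t] at h1
    rw [Nat.add_comm 1 p, h1, cnt_one] at h2
    rw [show ((1:ℕ) : ZMod N) = 1 by push_cast; ring] at h2
    by_cases hc : τ t = c <;> simp [hc] at h2 <;> omega
  intro t
  have key : ∀ m : ℕ, cnt τ c ((m : ℕ) : ZMod N) p = cnt τ c 0 p := by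
    intro m
    induction m with
    | zero => simp
    | succ m ih =>
      rw [show ((m + 1 : ℕ) : ZMod N) = ((m : ℕ) : ZMod N) + 1 by push_cast; ring, step, ih]
  have ht : ((t.val : ℕ) : ZMod N) = t := by rw [ZMod.natCast_val, ZMod.cast_id]
  rw [← ht]
  exact key t.val

/-- total number of positions with transition c -/
lemma mm_eq (hper : ∀ t : ZMod N, τ (t + ((p : ℕ) : ZMod N)) = τ t) (hN2 : N = 2 * p)
    (c : Fin d) :
    ((Finset.univ : Finset (ZMod N)).filter fun s => τ s = c).card = 2 * cnt τ c 0 p := by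
  have h1 : cnt τ c 0 N = ((Finset.univ : Finset (ZMod N)).filter fun s => τ s = c).card := by
    apply Finset.card_bij (fun j _ => ((j : ℕ) : ZMod N))
    · intro a ha
      simp only [Finset.mem_filter, Finset.mem_range] at ha ⊢
      refine ⟨Finset.mem_univ _, ?_⟩
      rw [← ha.2]
      congr 1
      rw [zero_add]
    · intro a ha b hb hab
      simp only [Finset.mem_filter, Finset.mem_range] at ha hb
      have := congrArg ZMod.val hab
      rwa [ZMod.val_natCast_of_lt ha.1, ZMod.val_natCast_of_lt hb.1] at this
    · intro s hs
      simp only [Finset.mem_filter, Finset.mem_univ, true_and] at hs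
      refine ⟨s.val, ?_, ?_⟩
      · simp only [Finset.mem_filter, Finset.mem_range]
        refine ⟨ZMod.val_lt s, ?_⟩
        rw [zero_add, ZMod.natCast_val, ZMod.cast_id]
        exact hs
      · rw [ZMod.natCast_val, ZMod.cast_id]
  rw [← h1]
  have hL : cnt τ c 0 N = cnt τ c 0 (p + p) := congrArg (cnt τ c 0) (by omega)
  rw [hL, cnt_add, zero_add, cnt_period hper c (((p : ℕ)) : ZMod N)]
  ring

lemma sum_cnt_t (L : ℕ) (c : Fin d) :
    ∑ t : ZMod N, cnt τ c t L =
      L * ((Finset.univ : Finset (ZMod N)).filter fun s => τ s = c).card := by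
  have inner : ∀ j : ℕ, (∑ t : ZMod N, if τ (t + ((j:ℕ) : ZMod N)) = c then 1 else 0)
      = ∑ s : ZMod N, if τ s = c then 1 else 0 :=
    fun j => Fintype.sum_equiv (Equiv.addRight ((j : ℕ) : ZMod N)) _ _ (fun t => rfl)
  calc ∑ t : ZMod N, cnt τ c t L
      = ∑ t : ZMod N, ∑ j ∈ Finset.range L, (if τ (t + ((j:ℕ):ZMod N)) = c then 1 else 0) := by
        apply Finset.sum_congr rfl; intro t _; exact Finset.card_filter _ _
    _ = ∑ j ∈ Finset.range L, ∑ t : ZMod N, (if τ (t + ((j:ℕ):ZMod N)) = c then 1 else 0) :=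
        Finset.sum_comm
    _ = ∑ j ∈ Finset.range L, ∑ s : ZMod N, (if τ s = c then 1 else 0) :=
        Finset.sum_congr rfl (fun j _ => inner j)
    _ = L * ∑ s : ZMod N, (if τ s = c then 1 else 0) := by
        rw [Finset.sum_const, Finset.card_range, smul_eq_mul]
    _ = L * ((Finset.univ : Finset (ZMod N)).filter fun s => τ s = c).card := by
        rw [Finset.card_filter]

lemma sum_card_filter_comm (F : Finset (Fin d)) (P : Fin d → ZMod N → Prop)
    [∀ c t, Decidable (P c t)] :
    ∑ t : ZMod N, (F.filter fun c => P c t).card =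
      ∑ c ∈ F, ((Finset.univ : Finset (ZMod N)).filter fun t => P c t).card := by
  simp_rw [Finset.card_filter]
  exact Finset.sum_comm

end UpperAux

lemma card_filter_or_disjoint (P Q : Fin d → Prop) [DecidablePred P] [DecidablePred Q]
    (h : ∀ c, P c → Q c → False) :
    (Finset.univ.filter fun c : Fin d => P c ∨ Q c).card =
      (Finset.univ.filter P).card + (Finset.univ.filter Q).card := by
  rw [Finset.filter_or, Finset.card_union_of_disjoint]
  rw [Finset.disjoint_left]
  intro c hc1 hc2
  simp only [Finset.mem_filter, Finset.mem_univ, true_and] at hc1 hc2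
  exact h c hc1 hc2

theorem upper_bound {k dd : ℕ} (hk4 : 4 ≤ k) (hd : 2 * dd = 3 * k + 4) (N : ℕ) (hNe : Even N)
    (x : ZMod N → Fin dd → Bool) (τ : ZMod N → Fin dd) (hC : IsCircuitCode dd k N x)
    (hτ : IsTransitionSeq x τ) (hsym0 : ∀ i : ZMod N, τ (i + ((N / 2 : ℕ) : ZMod N)) = τ i) :
    N ≤ 4 * k + 6 := by
  by_contra hbig
  push_neg at hbig
  obtain ⟨p, hpp⟩ := hNe
  have hN2 : N = 2 * p := by omega
  have hp : 2 * k + 4 ≤ p := by omega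
  haveI : NeZero N := ⟨by omega⟩
  have hNdiv : N / 2 = p := by omega
  have hsym : ∀ i : ZMod N, τ (i + ((p : ℕ) : ZMod N)) = τ i := by
    intro i; have := hsym0 i; rwa [hNdiv] at this
  have hN : 2 * k + 2 ≤ N := by omega
  set n : Fin dd → ℕ := fun c => cnt τ c 0 p with hn
  set A : Finset (Fin dd) := Finset.univ.filter (fun c => Odd (n c)) with hA
  set B : Finset (Fin dd) := Finset.univ.filter (fun c => ¬ Odd (n c)) with hB
  set α := A.card with hα
  have hαd : α ≤ dd := le_trans (Finset.card_filter_le _ _) (by simp)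
  set q := ∑ c ∈ A, n c with hq
  have hsumn : ∑ c : Fin dd, n c = p := sum_cnt 0 p
  have hABcard : α + B.card = dd := by
    rw [hα, hA, hB, Finset.card_filter_add_card_filter_not]
    simp
  have hqB : q + ∑ c ∈ B, n c = p := by
    rw [hq, hA, hB, Finset.sum_filter_add_sum_filter_not]
    exact hsumn
  have minh : ∀ L : ℕ, k ≤ L → L + k ≤ N → min (min L (N - L)) k = k := by
    intro L h1 h2
    rw [min_eq_right (le_min (by omega) (by omega))]
  have hdltk : ∀ (t : ZMod N) (L : ℕ), k ≤ L → L + k ≤ N → k ≤ dlt τ t L := by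
    intro t L h1 h2
    have hsp := spread_dlt hC hτ t L (by omega)
    rwa [minh L h1 h2] at hsp
  -- the k+1 lower bound on α
  have hdltp : ∀ t, dlt τ t p = α := by
    intro t
    rw [hα, hA]
    unfold dlt
    congr 1
    apply Finset.filter_congr
    intro c _
    rw [cnt_period hsym c t]
  have hαk1 : k + 1 ≤ α := by
    have h1 : k ≤ α := by
      have := hdltk 0 p (by omega) (by omega)
      rwa [hdltp 0] at this
    have hAne : A.Nonempty := Finset.card_pos.mp (by omega)
    obtain ⟨cA, hcA⟩ := hAne
    have hoddA : Odd (n cA) := (Finset.mem_filter.mp hcA).2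
    have hncA : 0 < cnt τ cA 0 p := hoddA.pos
    rw [cnt] at hncA
    obtain ⟨j, hj⟩ := Finset.card_pos.mp hncA
    have hjc := (Finset.mem_filter.mp hj).2
    set s : ZMod N := ((j : ℕ) : ZMod N) with hs
    have hjs : τ s = cA := by rwa [zero_add] at hjc
    set t₀ : ZMod N := s - ((p : ℕ) : ZMod N) with ht₀def
    have ht₀ : t₀ + ((p : ℕ) : ZMod N) = s := by rw [ht₀def]; ring
    have hwrapc : ∀ c, cnt τ c t₀ (p + 1) = n c + if τ s = c then 1 else 0 := by
      intro c
      rw [cnt_add, cnt_period hsym c t₀, ht₀, cnt_one]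
    have hdlt1 : dlt τ t₀ (p + 1) = (A.erase cA).card := by
      unfold dlt
      congr 1
      ext c
      simp only [Finset.mem_filter, Finset.mem_univ, true_and, Finset.mem_erase]
      rw [hwrapc c]
      by_cases hc : c = cA
      · subst hc
        rw [if_pos hjs]
        constructor
        · intro hcon
          rw [Nat.odd_iff] at hcon hoddA
          omega
        · rintro ⟨hne, -⟩
          exact absurd rfl hne
      · rw [if_neg (fun h : τ s = c => hc (h.symm.trans hjs))]
        rw [Nat.add_zero]
        constructor
        · intro hodd
          exact ⟨hc, Finset.mem_filter.mpr ⟨Finset.mem_univ _, hodd⟩⟩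
        · rintro ⟨-, hmem⟩
          exact (Finset.mem_filter.mp hmem).2
    have hsp := spread_dlt hC hτ t₀ (p + 1) (by omega)
    rw [hdlt1, Finset.card_erase_of_mem hcA, minh (p+1) (by omega) (by omega)] at hsp
    omega
  by_cases hsmall : ∀ c, n c ≤ 2
  · -- Case I : all multiplicities at most 2
    have hqα : q = α := by
      rw [hq]
      have : ∀ c ∈ A, n c = 1 := by
        intro c hc
        have hodd := (Finset.mem_filter.mp hc).2
        have := hsmall c
        rw [Nat.odd_iff] at hodd
        omega
      rw [Finset.sum_congr rfl this, Finset.sum_const, smul_eq_mul, mul_one, hα]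
    have hBsum : ∑ c ∈ B, n c ≤ 2 * B.card := by
      calc ∑ c ∈ B, n c ≤ ∑ _c ∈ B, 2 := Finset.sum_le_sum (fun c _ => hsmall c)
        _ = 2 * B.card := by rw [Finset.sum_const, smul_eq_mul]; ring
    omega
  · -- Case II : some coordinate appears ≥ 3 times
    push_neg at hsmall
    obtain ⟨c₀, hc₀⟩ := hsmall
    have hc₀3 : 3 ≤ n c₀ := hc₀
    have hp3 : 3 * k + 3 ≤ p := by
      have h3 : 2 < cnt τ c₀ 0 p := hc₀3
      rw [cnt] at h3
      obtain ⟨a, ha, b, hb, e, he, hab, hae, hbe⟩ := Finset.two_lt_card.mp h3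
      simp only [Finset.mem_filter, Finset.mem_range, zero_add] at ha hb he
      have key : ∀ u v : ℕ, τ ((u : ℕ) : ZMod N) = c₀ → τ ((v : ℕ) : ZMod N) = c₀ →
          u < v → k + 1 ≤ v - u := by
        intro u v hcu hcv huv
        by_contra hcon
        have hg := gap_ne hC hτ hN (j := u) (j' := v) huv (by omega) 0
        rw [zero_add, zero_add, hcv, hcu] at hg
        exact hg rfl
      have wrapkey : ∀ u v : ℕ, τ ((u : ℕ) : ZMod N) = c₀ → τ ((v : ℕ) : ZMod N) = c₀ →
          v < u + p → k + 1 ≤ u + p - v := by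
        intro u v hcu hcv hlt
        by_contra hcon
        have hg := gap_ne hC hτ hN (j := v) (j' := u + p) hlt (by omega) 0
        apply hg
        rw [zero_add, zero_add, hcv, Nat.cast_add]
        rw [hsym ((u : ℕ) : ZMod N), hcu]
      have tri : ∀ u v w : ℕ, u < p → w < p →
          τ ((u : ℕ) : ZMod N) = c₀ → τ ((v : ℕ) : ZMod N) = c₀ → τ ((w : ℕ) : ZMod N) = c₀ →
          u < v → v < w → 3 * k + 3 ≤ p := by
        intro u v w hu hw hcu hcv hcw huv hvw
        have g1 := key u v hcu hcv huv
        have g2 := key v w hcv hcw hvw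
        have g3 := wrapkey u w hcu hcw (by omega)
        omega
      rcases Nat.lt_trichotomy a b with h1 | h1 | h1
      · rcases Nat.lt_trichotomy b e with h2 | h2 | h2
        · exact tri a b e ha.1 he.1 ha.2 hb.2 he.2 h1 h2
        · exact absurd h2 hbe
        · rcases Nat.lt_trichotomy a e with h3 | h3 | h3
          · exact tri a e b ha.1 hb.1 ha.2 he.2 hb.2 h3 h2
          · exact absurd h3 hae
          · exact tri e a b he.1 hb.1 he.2 ha.2 hb.2 h3 h1
      · exact absurd h1 hab
      · rcases Nat.lt_trichotomy a e with h2 | h2 | h2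
        · exact tri b a e hb.1 he.1 hb.2 ha.2 he.2 h1 h2
        · exact absurd h2 hae
        · rcases Nat.lt_trichotomy b e with h3 | h3 | h3
          · exact tri b e a hb.1 ha.1 hb.2 he.2 ha.2 h3 h2
          · exact absurd h3 hbe
          · exact tri e b a he.1 ha.1 he.2 hb.2 ha.2 h3 h1

    -- counting argument with windows of length 2k+2
    set L2 := 2 * k + 2 with hL2def
    have hcnt2 : ∀ (c : Fin dd) (t : ZMod N), cnt τ c t L2 ≤ 2 :=
      fun c t => cnt_le_two hC hτ hN le_rfl c t
    have hcnt1 : ∀ (c : Fin dd) (t : ZMod N), cnt τ c t (k + 1) ≤ 1 :=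
      fun c t => cnt_le_one hC hτ hN le_rfl c t
    have hpoint : ∀ t : ZMod N,
        2 * k ≤ α + 2 * ((B.filter fun c => cnt τ c t L2 = 1).card) := by
      intro t
      have hb1 : (B.filter fun c => cnt τ c t L2 = 1).card
          = (Finset.univ.filter fun c : Fin dd => ¬ Odd (n c) ∧ cnt τ c t L2 = 1).card := by
        rw [hB, Finset.filter_filter]
      have ha1 : (A.filter fun c => cnt τ c t L2 = 1).card
          = (Finset.univ.filter fun c : Fin dd => Odd (n c) ∧ cnt τ c t L2 = 1).card := by
        rw [hA, Finset.filter_filter]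
      have hplain : k ≤ (A.filter fun c => cnt τ c t L2 = 1).card
          + (B.filter fun c => cnt τ c t L2 = 1).card := by
        have hdk := hdltk t L2 (by omega) (by omega)
        have hdlteq : dlt τ t L2 = (A.filter fun c => cnt τ c t L2 = 1).card
            + (B.filter fun c => cnt τ c t L2 = 1).card := by
          unfold dlt
          have hstep : (Finset.univ.filter fun c : Fin dd => Odd (cnt τ c t L2))
              = (Finset.univ.filter fun c : Fin dd => cnt τ c t L2 = 1) := by
            apply Finset.filter_congr
            intro c _
            have h2 := hcnt2 c t
            rw [Nat.odd_iff]
            constructor <;> (intro hh; omega)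
          rw [hstep, card_split (fun c => Odd (n c)) (fun c => cnt τ c t L2 = 1), ha1, hb1]
        omega
      have hwrapw : k + (A.filter fun c => cnt τ c t L2 = 1).card
          ≤ α + (B.filter fun c => cnt τ c t L2 = 1).card := by
        set t' : ZMod N := t - ((p : ℕ) : ZMod N) with ht'd
        have ht' : t' + ((p : ℕ) : ZMod N) = t := by rw [ht'd]; ring
        have hcnt' : ∀ c, cnt τ c t' (p + L2) = n c + cnt τ c t L2 := by
          intro c
          rw [cnt_add, cnt_period hsym c t', ht']
        have hdk := hdltk t' (p + L2) (by omega) (by omega)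
        have hdlteq : dlt τ t' (p + L2)
            = (Finset.univ.filter fun c : Fin dd => Odd (n c) ∧ ¬ cnt τ c t L2 = 1).card
              + (Finset.univ.filter fun c : Fin dd => ¬ Odd (n c) ∧ cnt τ c t L2 = 1).card := by
          unfold dlt
          have hstep : (Finset.univ.filter fun c : Fin dd => Odd (cnt τ c t' (p + L2)))
              = (Finset.univ.filter fun c : Fin dd =>
                  (Odd (n c) ∧ ¬ cnt τ c t L2 = 1) ∨ (¬ Odd (n c) ∧ cnt τ c t L2 = 1)) := by
            apply Finset.filter_congr
            intro c _
            rw [hcnt' c]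
            have h2 := hcnt2 c t
            simp only [Nat.odd_iff]
            constructor <;> (intro hh; omega)
          rw [hstep]
          exact card_filter_or_disjoint _ _ (by tauto)
        have hXa : (Finset.univ.filter fun c : Fin dd => Odd (n c) ∧ ¬ cnt τ c t L2 = 1).card
            + (A.filter fun c => cnt τ c t L2 = 1).card = α := by
          have e1 : (Finset.univ.filter fun c : Fin dd => Odd (n c) ∧ ¬ cnt τ c t L2 = 1)
              = A.filter (fun c => ¬ cnt τ c t L2 = 1) := by rw [hA, Finset.filter_filter]
          rw [e1, Nat.add_comm, hα]
          exact Finset.card_filter_add_card_filter_not (fun c => cnt τ c t L2 = 1)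
        rw [hdlteq] at hdk
        rw [hb1]
        omega
      omega
    set S := ∑ t : ZMod N, (B.filter fun c => cnt τ c t L2 = 1).card with hSdef
    have hsum1 : N * (2 * k) ≤ N * α + 2 * S := by
      have h1 : ∑ _t : ZMod N, (2 * k)
          ≤ ∑ t : ZMod N, (α + 2 * ((B.filter fun c => cnt τ c t L2 = 1).card)) :=
        Finset.sum_le_sum (fun t _ => hpoint t)
      rw [Finset.sum_const, Finset.card_univ, ZMod.card, smul_eq_mul] at h1
      rw [Finset.sum_add_distrib, Finset.sum_const, Finset.card_univ, ZMod.card,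
        smul_eq_mul, ← Finset.mul_sum, ← hSdef] at h1
      exact h1
    have hS2 : S = ∑ c ∈ B, ((Finset.univ : Finset (ZMod N)).filter
        fun tt => cnt τ c tt L2 = 1).card := sum_card_filter_comm B _
    have hones : ∀ c : Fin dd,
        ((Finset.univ : Finset (ZMod N)).filter fun tt => cnt τ c tt L2 = 1).card
          + L2 * (2 * n c) ≤ 2 * N := by
      intro c
      set o1 := ((Finset.univ : Finset (ZMod N)).filter fun tt => cnt τ c tt L2 = 1).card with ho1
      set o2 := ((Finset.univ : Finset (ZMod N)).filter fun tt => cnt τ c tt L2 = 2).card with ho2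
      have hdisj : o1 + o2 ≤ N := by
        have hdis : Disjoint
            ((Finset.univ : Finset (ZMod N)).filter fun tt => cnt τ c tt L2 = 1)
            ((Finset.univ : Finset (ZMod N)).filter fun tt => cnt τ c tt L2 = 2) := by
          rw [Finset.disjoint_left]
          intro tt h1 h2
          simp only [Finset.mem_filter, Finset.mem_univ, true_and] at h1 h2
          omega
        calc o1 + o2
            = (((Finset.univ : Finset (ZMod N)).filter fun tt => cnt τ c tt L2 = 1)
              ∪ ((Finset.univ : Finset (ZMod N)).filter fun tt => cnt τ c tt L2 = 2)).card :=
              (Finset.card_union_of_disjoint hdis).symm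
          _ ≤ (Finset.univ : Finset (ZMod N)).card := Finset.card_le_card (Finset.subset_univ _)
          _ = N := by rw [Finset.card_univ, ZMod.card]
      have hsumc : ∑ tt : ZMod N, cnt τ c tt L2 = o1 + 2 * o2 := by
        have hpt : ∀ tt : ZMod N, cnt τ c tt L2
            = (if cnt τ c tt L2 = 1 then 1 else 0) + (if cnt τ c tt L2 = 2 then 2 else 0) := by
          intro tt
          have := hcnt2 c tt
          by_cases h1 : cnt τ c tt L2 = 1 <;> by_cases h2 : cnt τ c tt L2 = 2 <;>
            simp [h1, h2] <;> omega
        rw [Finset.sum_congr rfl (fun tt _ => hpt tt), Finset.sum_add_distrib]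
        congr 1
        · rw [ho1, Finset.card_filter]
        · have hmm : ∀ tt : ZMod N, (if cnt τ c tt L2 = 2 then 2 else 0)
              = 2 * (if cnt τ c tt L2 = 2 then 1 else 0) := by
            intro tt; split <;> ring
          rw [Finset.sum_congr rfl (fun tt _ => hmm tt), ← Finset.mul_sum, ho2,
            Finset.card_filter]
      have hcount : ∑ tt : ZMod N, cnt τ c tt L2 = L2 * (2 * n c) := by
        rw [sum_cnt_t, mm_eq hsym hN2]
      omega
    have hsum2 : S + L2 * (2 * (∑ c ∈ B, n c)) ≤ 2 * N * B.card := by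
      rw [hS2]
      have hmul : L2 * (2 * ∑ c ∈ B, n c) = ∑ c ∈ B, L2 * (2 * n c) := by
        rw [Finset.mul_sum, Finset.mul_sum]
      calc (∑ c ∈ B, ((Finset.univ : Finset (ZMod N)).filter
              fun tt => cnt τ c tt L2 = 1).card) + L2 * (2 * ∑ c ∈ B, n c)
          = ∑ c ∈ B, (((Finset.univ : Finset (ZMod N)).filter
              fun tt => cnt τ c tt L2 = 1).card + L2 * (2 * n c)) := by
            rw [hmul, ← Finset.sum_add_distrib]
        _ ≤ ∑ _c ∈ B, 2 * N := Finset.sum_le_sum (fun c _ => hones c)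
        _ = 2 * N * B.card := by rw [Finset.sum_const, smul_eq_mul]; ring
    set SB := ∑ c ∈ B, n c with hSBdef
    have hppos : (0 : ℤ) < (p : ℤ) := by exact_mod_cast (by omega : 0 < p)
    rcases Nat.lt_or_ge α (k + 2) with hαcase | hαcase
    · -- α = k + 1 : use the adjacency argument
      have hαeq : α = k + 1 := by omega
      have hadj : ∀ s : ZMod N, Odd (n (τ s)) → Odd (n (τ (s + 1))) → False := by
        intro s hodd1 hodd2
        have hne : τ (s + 1) ≠ τ s := by
          have := gap hC hτ hN 1 s (le_refl 1) (by omega)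
          rwa [Nat.cast_one] at this
        set t' : ZMod N := s - ((p : ℕ) : ZMod N) with ht'd
        have ht' : t' + ((p : ℕ) : ZMod N) = s := by rw [ht'd]; ring
        have hcnt2' : ∀ c, cnt τ c t' (p + 2) = n c
            + ((if τ s = c then 1 else 0) + (if τ (s + 1) = c then 1 else 0)) := by
          intro c
          rw [cnt_add, cnt_period hsym c t', ht']
          congr 1
          rw [show (2 : ℕ) = 1 + 1 by rfl, cnt_add, cnt_one, cnt_one, Nat.cast_one]
        have hdlteq : dlt τ t' (p + 2) = ((A.erase (τ s)).erase (τ (s + 1))).card := by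
          unfold dlt
          congr 1
          ext c
          simp only [Finset.mem_filter, Finset.mem_univ, true_and, Finset.mem_erase]
          rw [hcnt2' c]
          by_cases h1 : c = τ s
          · subst h1
            rw [if_pos rfl, if_neg hne]
            constructor
            · intro hcon
              rw [Nat.odd_iff] at hcon hodd1
              omega
            · rintro ⟨-, hcon, -⟩
              exact absurd rfl hcon
          · by_cases h2 : c = τ (s + 1)
            · subst h2
              rw [if_neg (fun hh : τ s = τ (s+1) => hne hh.symm), if_pos rfl]
              constructor
              · intro hcon
                rw [Nat.odd_iff] at hcon hodd2
                omega
              · rintro ⟨hcon, -⟩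
                exact absurd rfl hcon
            · rw [if_neg (fun hh : τ s = c => h1 hh.symm),
                if_neg (fun hh : τ (s+1) = c => h2 hh.symm)]
              simp only [Nat.add_zero]
              constructor
              · intro hodd
                exact ⟨h2, h1, Finset.mem_filter.mpr ⟨Finset.mem_univ _, hodd⟩⟩
              · rintro ⟨-, -, hmem⟩
                exact (Finset.mem_filter.mp hmem).2
        have hmemA1 : τ s ∈ A := Finset.mem_filter.mpr ⟨Finset.mem_univ _, hodd1⟩
        have hmemA2 : τ (s + 1) ∈ A.erase (τ s) :=
          Finset.mem_erase.mpr ⟨hne, Finset.mem_filter.mpr ⟨Finset.mem_univ _, hodd2⟩⟩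
        have hcard : ((A.erase (τ s)).erase (τ (s + 1))).card = α - 2 := by
          rw [Finset.card_erase_of_mem hmemA2, Finset.card_erase_of_mem hmemA1]
          omega
        have hdk := hdltk t' (p + 2) (by omega) (by omega)
        rw [hdlteq, hcard] at hdk
        omega
      have hSAcard : (Finset.univ.filter fun s : ZMod N => Odd (n (τ s))).card = 2 * q := by
        have hmap : ∀ s ∈ (Finset.univ.filter fun s : ZMod N => Odd (n (τ s))), τ s ∈ A := by
          intro s hs
          exact Finset.mem_filter.mpr ⟨Finset.mem_univ _, (Finset.mem_filter.mp hs).2⟩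
        rw [Finset.card_eq_sum_card_fiberwise hmap]
        have hfib : ∀ c ∈ A, ((Finset.univ.filter fun s : ZMod N => Odd (n (τ s))).filter
            fun s => τ s = c).card = 2 * n c := by
          intro c hc
          have he : (Finset.univ.filter fun s : ZMod N => Odd (n (τ s))).filter
              (fun s => τ s = c) = Finset.univ.filter (fun s : ZMod N => τ s = c) := by
            rw [Finset.filter_filter]
            apply Finset.filter_congr
            intro s _
            constructor
            · exact fun hh => hh.2
            · intro hh
              refine ⟨?_, hh⟩
              rw [hh]
              exact (Finset.mem_filter.mp hc).2
          rw [he, mm_eq hsym hN2]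
        rw [Finset.sum_congr rfl hfib, ← Finset.mul_sum, hq]
      have h2q : 2 * (2 * q) ≤ N := by
        rw [← hSAcard]
        have hsub : (Finset.univ.filter fun s : ZMod N => Odd (n (τ s))).card
            ≤ (Finset.univ.filter fun s : ZMod N => ¬ Odd (n (τ s))).card := by
          apply Finset.card_le_card_of_injOn (fun s => s + 1)
          · intro s hs
            simp only [Finset.mem_coe, Finset.mem_filter, Finset.mem_univ, true_and] at hs ⊢
            intro hcon
            exact hadj s hs hcon
          · intro s1 _ s2 _ hs
            exact add_right_cancel hs
        have htot : (Finset.univ.filter fun s : ZMod N => Odd (n (τ s))).card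
            + (Finset.univ.filter fun s : ZMod N => ¬ Odd (n (τ s))).card = N := by
          rw [Finset.card_filter_add_card_filter_not, Finset.card_univ, ZMod.card]
        omega
      -- final arithmetic for α = k+1
      set Bc := B.card with hBc
      clear_value S SB q α Bc
      rw [hN2] at hsum1 hsum2 h2q
      have F1 : (2 : ℤ) * p * (2 * k) ≤ 2 * p * α + 2 * S := by exact_mod_cast hsum1
      have hL2Z : ((L2 : ℕ) : ℤ) = 2 * k + 2 := by exact_mod_cast hL2def
      have F2 : (S : ℤ) + (L2 : ℤ) * (2 * SB) ≤ 2 * (2 * p) * Bc := by exact_mod_cast hsum2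
      rw [hL2Z] at F2
      have F3 : (2 : ℤ) * (2 * q) ≤ 2 * p := by exact_mod_cast h2q
      have hqBZ : (q : ℤ) + SB = p := by exact_mod_cast hqB
      have hkq : (8 * (k : ℤ) + 8) * q + (8 * k + 8) * SB = (8 * k + 8) * p := by
        linear_combination (8 * (k : ℤ) + 8) * hqBZ
      have F3' : (4 : ℤ) * q ≤ 2 * p := by linarith only [F3]
      have h2q' : (2 * (k : ℤ) + 2) * (4 * q) ≤ (2 * k + 2) * (2 * p) :=
        mul_le_mul_of_nonneg_left F3' (by positivity)
      have hαZ : (α : ℤ) = k + 1 := by exact_mod_cast hαeq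
      have hpα : (p : ℤ) * α = p * k + p := by rw [hαZ]; ring
      have hZ : (p : ℤ) * (6 * k + 2) ≤ (p : ℤ) * (8 * Bc) := by linarith only [F1, F2, hkq, h2q', hpα]
      have hfin : (6 * (k : ℤ) + 2) ≤ 8 * Bc := le_of_mul_le_mul_left hZ hppos
      have hcards : (α : ℤ) + Bc = dd := by exact_mod_cast hABcard
      have hdZ : (2 : ℤ) * dd = 3 * k + 4 := by exact_mod_cast hd
      have hk4Z : (4 : ℤ) ≤ k := by exact_mod_cast hk4
      omega
    · -- α ≥ k + 2 : use (k+1)-windows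
      set m2 := (α + 1) / 2 with hm2def
      have hm2a : 2 * m2 ≤ α + 1 := by omega
      have hm2b : α ≤ 2 * m2 := by omega
      have haawin : ∀ t : ZMod N, (A.filter fun c => cnt τ c t (k + 1) = 1).card ≤ m2 := by
        intro t
        set t' : ZMod N := t - ((p : ℕ) : ZMod N) with ht'd
        have ht' : t' + ((p : ℕ) : ZMod N) = t := by rw [ht'd]; ring
        have hcnt' : ∀ c, cnt τ c t' (p + (k + 1)) = n c + cnt τ c t (k + 1) := by
          intro c
          rw [cnt_add, cnt_period hsym c t', ht']
        have hdk := hdltk t' (p + (k + 1)) (by omega) (by omega)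
        have htot : (A.filter fun c => cnt τ c t (k+1) = 1).card
            + (B.filter fun c => cnt τ c t (k+1) = 1).card = k + 1 := by
          have h1 : (Finset.univ.filter fun c : Fin dd => cnt τ c t (k+1) = 1).card
              = ∑ c : Fin dd, cnt τ c t (k+1) := by
            rw [Finset.card_filter]
            apply Finset.sum_congr rfl
            intro c _
            have := hcnt1 c t
            by_cases hcc : cnt τ c t (k+1) = 1 <;> simp [hcc] <;> omega
          have h2 : (Finset.univ.filter fun c : Fin dd => cnt τ c t (k+1) = 1).card
              = (A.filter fun c => cnt τ c t (k+1) = 1).card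
                + (B.filter fun c => cnt τ c t (k+1) = 1).card := by
            rw [card_split (fun c => Odd (n c)) (fun c => cnt τ c t (k+1) = 1), hA, hB,
              Finset.filter_filter, Finset.filter_filter]
          rw [← h2, h1, sum_cnt]
        have hdlteq : dlt τ t' (p + (k + 1))
            = (Finset.univ.filter fun c : Fin dd => Odd (n c) ∧ ¬ cnt τ c t (k+1) = 1).card
              + (Finset.univ.filter fun c : Fin dd => ¬ Odd (n c) ∧ cnt τ c t (k+1) = 1).card := by
          unfold dlt
          have hstep : (Finset.univ.filter fun c : Fin dd => Odd (cnt τ c t' (p + (k + 1))))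
              = (Finset.univ.filter fun c : Fin dd =>
                  (Odd (n c) ∧ ¬ cnt τ c t (k+1) = 1) ∨ (¬ Odd (n c) ∧ cnt τ c t (k+1) = 1)) := by
            apply Finset.filter_congr
            intro c _
            rw [hcnt' c]
            have h2 := hcnt1 c t
            simp only [Nat.odd_iff]
            constructor <;> (intro hh; omega)
          rw [hstep]
          exact card_filter_or_disjoint _ _ (by tauto)
        have hXa : (Finset.univ.filter fun c : Fin dd => Odd (n c) ∧ ¬ cnt τ c t (k+1) = 1).card
            + (A.filter fun c => cnt τ c t (k+1) = 1).card = α := by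
          have e1 : (Finset.univ.filter fun c : Fin dd => Odd (n c) ∧ ¬ cnt τ c t (k+1) = 1)
              = A.filter (fun c => ¬ cnt τ c t (k+1) = 1) := by rw [hA, Finset.filter_filter]
          rw [e1, Nat.add_comm, hα]
          exact Finset.card_filter_add_card_filter_not (fun c => cnt τ c t (k+1) = 1)
        have hBB : (Finset.univ.filter fun c : Fin dd => ¬ Odd (n c) ∧ cnt τ c t (k+1) = 1).card
            = (B.filter fun c => cnt τ c t (k+1) = 1).card := by
          rw [hB, Finset.filter_filter]
        rw [hdlteq, hBB] at hdk
        omega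
      have hsum3 : ∑ t : ZMod N, (A.filter fun c => cnt τ c t (k + 1) = 1).card
          = (k + 1) * (2 * q) := by
        rw [sum_card_filter_comm A _]
        have hper2 : ∀ c ∈ A, ((Finset.univ : Finset (ZMod N)).filter
            fun tt => cnt τ c tt (k+1) = 1).card = (k + 1) * (2 * n c) := by
          intro c _
          have h1 : ((Finset.univ : Finset (ZMod N)).filter
              fun tt => cnt τ c tt (k+1) = 1).card = ∑ tt : ZMod N, cnt τ c tt (k+1) := by
            rw [Finset.card_filter]
            apply Finset.sum_congr rfl
            intro tt _
            have := hcnt1 c tt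
            by_cases hcc : cnt τ c tt (k+1) = 1 <;> simp [hcc] <;> omega
          rw [h1, sum_cnt_t, mm_eq hsym hN2]
        rw [Finset.sum_congr rfl hper2, ← Finset.mul_sum, hq, ← Finset.mul_sum]
      have hqbound : (k + 1) * (2 * q) ≤ N * m2 := by
        rw [← hsum3]
        calc ∑ t : ZMod N, (A.filter fun c => cnt τ c t (k + 1) = 1).card
            ≤ ∑ _t : ZMod N, m2 := Finset.sum_le_sum (fun t _ => haawin t)
          _ = N * m2 := by rw [Finset.sum_const, Finset.card_univ, ZMod.card, smul_eq_mul]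
      -- final arithmetic for α ≥ k+2
      set Bc := B.card with hBc
      clear_value S SB q α m2 Bc
      rw [hN2] at hsum1 hsum2 hqbound
      have F1 : (2 : ℤ) * p * (2 * k) ≤ 2 * p * α + 2 * S := by exact_mod_cast hsum1
      have hL2Z : ((L2 : ℕ) : ℤ) = 2 * k + 2 := by exact_mod_cast hL2def
      have F2 : (S : ℤ) + (L2 : ℤ) * (2 * SB) ≤ 2 * (2 * p) * Bc := by exact_mod_cast hsum2
      rw [hL2Z] at F2
      have F3 : ((k : ℤ) + 1) * (2 * q) ≤ 2 * p * m2 := by exact_mod_cast hqbound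
      have hqBZ : (q : ℤ) + SB = p := by exact_mod_cast hqB
      have hkq : (8 * (k : ℤ) + 8) * q + (8 * k + 8) * SB = (8 * k + 8) * p := by
        linear_combination (8 * (k : ℤ) + 8) * hqBZ
      have hZ : (p : ℤ) * (12 * k + 8) ≤ (p : ℤ) * (2 * α + 8 * Bc + 8 * m2) := by
        linarith only [F1, F2, F3, hkq]
      have hfin : (12 * (k : ℤ) + 8) ≤ 2 * α + 8 * Bc + 8 * m2 :=
        le_of_mul_le_mul_left hZ hppos
      have hcards : (α : ℤ) + Bc = dd := by exact_mod_cast hABcard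
      have hdZ : (2 : ℤ) * dd = 3 * k + 4 := by exact_mod_cast hd
      have hk4Z : (4 : ℤ) ≤ k := by exact_mod_cast hk4
      have hm2aZ : (2 : ℤ) * m2 ≤ α + 1 := by exact_mod_cast hm2a
      have hm2bZ : (α : ℤ) ≤ 2 * m2 := by exact_mod_cast hm2b
      have hαcZ : (k : ℤ) + 2 ≤ α := by exact_mod_cast hαcase
      omega


section Exist

/-- half-period transition pattern -/
def fval (h v : ℕ) : ℕ :=
  if v % 2 = 0 then
    (if v ≤ 2 * h then v / 2 else 2 * h + 1 + (v - (2 * h + 2)) / 2)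
  else
    (if v ≤ 2 * h then h + 1 + (v - 1) / 2 else (v - (2 * h + 1)) / 2)

/-- full transition pattern on `[0, 8h+6)` (period `4h+3`) -/
def Gf (h v : ℕ) : ℕ := if v < 4 * h + 3 then fval h v else fval h (v - (4 * h + 3))

def FF (h d : ℕ) [NeZero d] (v : ℕ) : Fin d := Fin.ofNat d (Gf h v)

def tauF (h d N : ℕ) [NeZero d] : ZMod N → Fin d := fun s => FF h d s.val

def countF (h d : ℕ) [NeZero d] (c : Fin d) (m : ℕ) : ℕ :=
  ((Finset.range m).filter fun v => FF h d v = c).card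

def xF (h d N : ℕ) [NeZero d] : ZMod N → Fin d → Bool :=
  fun t c => decide (Odd (countF h d c t.val))

def isG1 (h v : ℕ) : Prop := (v % 2 = 0 ∧ v ≤ 2 * h) ∨ (v % 2 = 1 ∧ 4 * h + 3 ≤ v ∧ v ≤ 6 * h + 3)

def isG2 (h v : ℕ) : Prop := (v % 2 = 1 ∧ 2 * h + 1 ≤ v ∧ v ≤ 4 * h + 1) ∨ (v % 2 = 0 ∧ 6 * h + 4 ≤ v)

instance (h v : ℕ) : Decidable (isG1 h v) := by unfold isG1; infer_instance
instance (h v : ℕ) : Decidable (isG2 h v) := by unfold isG2; infer_instance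

lemma fval_lt (h : ℕ) (hh : 2 ≤ h) : ∀ v, v ≤ 4 * h + 2 → fval h v < 3 * h + 2 := by
  intro v hv
  unfold fval
  split <;> split <;> omega

lemma occkey (h : ℕ) (hh : 2 ≤ h) : ∀ u u' : ℕ, u ≤ 4 * h + 2 → u' ≤ 4 * h + 2 →
    fval h u = fval h u' →
    u = u' ∨ (u % 2 = 0 ∧ u ≤ 2 * h ∧ u' = u + 2 * h + 1)
      ∨ (u' % 2 = 0 ∧ u' ≤ 2 * h ∧ u = u' + 2 * h + 1) := by
  intro u u' hu hu'
  unfold fval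
  split <;> split <;> split <;> split <;> omega

lemma Gf_lt (h : ℕ) (hh : 2 ≤ h) : ∀ v, v ≤ 8 * h + 5 → Gf h v < 3 * h + 2 := by
  intro v hv
  unfold Gf
  split
  · exact fval_lt h hh v (by omega)
  · exact fval_lt h hh _ (by omega)

lemma occG (h : ℕ) (hh : 2 ≤ h) : ∀ v v' : ℕ, v < v' → v' ≤ 8 * h + 5 → Gf h v = Gf h v' →
    (v' - v = 2 * h + 1 ∧ isG1 h v) ∨ (v' - v = 2 * h + 2 ∧ isG2 h v) ∨ 4 * h + 3 ≤ v' - v := by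
  intro v v' hvv hv' heq
  unfold Gf at heq
  unfold isG1 isG2
  by_cases h1 : v < 4 * h + 3 <;> by_cases h2 : v' < 4 * h + 3
  · rw [if_pos h1, if_pos h2] at heq
    rcases occkey h hh v v' (by omega) (by omega) heq with hc | hc | hc <;> omega
  · rw [if_pos h1, if_neg h2] at heq
    rcases occkey h hh v (v' - (4 * h + 3)) (by omega) (by omega) heq with hc | hc | hc <;> omega
  · omega
  · rw [if_neg h1, if_neg h2] at heq
    rcases occkey h hh (v - (4 * h + 3)) (v' - (4 * h + 3)) (by omega) (by omega) heq
      with hc | hc | hc <;> omega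

end Exist

section ExistPf

variable {h d N : ℕ} [NeZero d] [NeZero N]

lemma countF_succ (c : Fin d) (m : ℕ) :
    countF h d c (m + 1) = countF h d c m + if FF h d m = c then 1 else 0 := by
  unfold countF
  rw [Finset.range_add_one, Finset.filter_insert]
  split
  · rw [Finset.card_insert_of_notMem (by simp)]
  · simp

lemma countF_add (c : Fin d) (a b : ℕ) :
    countF h d c (a + b) = countF h d c a
      + ((Finset.range b).filter fun v => FF h d (a + v) = c).card := by
  induction b with
  | zero => simp [countF]
  | succ b ih =>
    rw [← Nat.add_assoc, countF_succ, ih, Finset.range_add_one, Finset.filter_insert]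
    split
    · rw [Finset.card_insert_of_notMem (by simp)]
      omega
    · simp

lemma FF_per (hv : v < 4 * h + 3) : FF h d (4 * h + 3 + v) = FF h d v := by
  unfold FF
  congr 1
  unfold Gf
  rw [if_neg (by omega), if_pos hv]
  congr 1
  omega

lemma countF_even (c : Fin d) : ¬ Odd (countF h d c (8 * h + 6)) := by
  have h1 : countF h d c (8 * h + 6) = countF h d c ((4 * h + 3) + (4 * h + 3)) := by
    congr 1
    omega
  rw [h1, countF_add]
  have h2 : ((Finset.range (4 * h + 3)).filter fun v => FF h d ((4 * h + 3) + v) = c).card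
      = countF h d c (4 * h + 3) := by
    unfold countF
    congr 1
    apply Finset.filter_congr
    intro v hv
    rw [FF_per (Finset.mem_range.mp hv)]
  rw [h2, Nat.odd_iff]
  omega

lemma isTransF (hN8 : N = 8 * h + 6) : IsTransitionSeq (xF h d N) (tauF h d N) := by
  intro i c
  have hvlt : i.val < N := ZMod.val_lt i
  have hcast : ((i.val + 1 : ℕ) : ZMod N) = i + 1 := by
    push_cast
    rw [ZMod.natCast_val, ZMod.cast_id]
  by_cases hc : i.val + 1 < N
  · have hval : (i + 1).val = i.val + 1 := by
      rw [← hcast, ZMod.val_natCast, Nat.mod_eq_of_lt hc]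
    show (xF h d N (i+1) c ≠ xF h d N i c) ↔ c = tauF h d N i
    unfold xF tauF
    rw [hval, countF_succ, ne_eq, decide_eq_decide]
    by_cases hFc : FF h d i.val = c
    · rw [if_pos hFc]
      simp only [Nat.odd_iff]
      constructor
      · intro _
        exact hFc.symm
      · intro _
        omega
    · rw [if_neg hFc, Nat.add_zero]
      constructor
      · intro hcon
        exact absurd Iff.rfl hcon
      · intro hceq
        exact absurd hceq.symm hFc
  · have hNv : i.val + 1 = N := by omega
    have hval : (i + 1).val = 0 := by
      rw [← hcast, ZMod.val_natCast, hNv, Nat.mod_self]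
    have heven := countF_even (h := h) (d := d) c
    have hsplit : countF h d c N = countF h d c i.val + if FF h d i.val = c then 1 else 0 := by
      rw [show countF h d c N = countF h d c (i.val + 1) from congrArg (countF h d c) hNv.symm]
      exact countF_succ c i.val
    rw [← hN8] at heven
    rw [hsplit] at heven
    show (xF h d N (i+1) c ≠ xF h d N i c) ↔ c = tauF h d N i
    unfold xF tauF
    rw [hval, ne_eq, decide_eq_decide]
    have h0 : countF h d c 0 = 0 := by unfold countF; simp
    rw [h0]
    by_cases hFc : FF h d i.val = c
    · rw [if_pos hFc] at heven
      simp only [Nat.odd_iff] at *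
      constructor
      · intro _
        exact hFc.symm
      · intro _
        omega
    · rw [if_neg hFc, Nat.add_zero] at heven
      simp only [Nat.odd_iff] at *
      constructor
      · intro hcon
        omega
      · intro hceq
        exact absurd hceq.symm hFc
  
lemma tau_per (hN8 : N = 8 * h + 6) :
    ∀ i : ZMod N, tauF h d N (i + ((4 * h + 3 : ℕ) : ZMod N)) = tauF h d N i := by
  intro i
  have hvi : i.val < N := ZMod.val_lt i
  have hval : (i + ((4 * h + 3 : ℕ) : ZMod N)).val = (i.val + (4 * h + 3)) % N := by
    rw [show i + ((4 * h + 3 : ℕ) : ZMod N) = ((i.val + (4 * h + 3) : ℕ) : ZMod N) by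
      push_cast
      rw [ZMod.natCast_val, ZMod.cast_id]]
    exact ZMod.val_natCast _ _
  unfold tauF FF
  congr 1
  rw [hval]
  by_cases hcase : i.val < 4 * h + 3
  · have hmod : (i.val + (4 * h + 3)) % N = i.val + (4 * h + 3) :=
      Nat.mod_eq_of_lt (by omega)
    rw [hmod]
    unfold Gf
    rw [if_neg (by omega), if_pos hcase]
    congr 1
    omega
  · have hmod : (i.val + (4 * h + 3)) % N = i.val - (4 * h + 3) := by
      have e1 : (i.val + (4 * h + 3)) % N = (i.val + (4 * h + 3)) % (8 * h + 6) :=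
        congrArg (fun z => (i.val + (4 * h + 3)) % z) hN8
      rw [e1, Nat.mod_eq_sub_mod (by omega)]
      have h1 : i.val + (4 * h + 3) - (8 * h + 6) = i.val - (4 * h + 3) := by omega
      rw [h1, Nat.mod_eq_of_lt (by omega)]
    rw [hmod]
    unfold Gf
    rw [if_pos (by omega), if_neg hcase]

end ExistPf

section MainDelta

variable {h d N : ℕ} [NeZero d] [NeZero N]

lemma cnt_formF (hh : 2 ≤ h) (hd3 : d = 3 * h + 2) (hN8 : N = 8 * h + 6)
    (c : Fin d) (t m : ℕ) (htm : t + m ≤ 8 * h + 6) :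
    cnt (tauF h d N) c ((t : ℕ) : ZMod N) m
      = ((Finset.range m).filter fun j => Gf h (t + j) = c.val).card := by
  unfold cnt
  congr 1
  apply Finset.filter_congr
  intro j hj
  have hjm : j < m := Finset.mem_range.mp hj
  have hval : (((t : ℕ) : ZMod N) + ((j : ℕ) : ZMod N)).val = t + j := by
    rw [show ((t : ℕ) : ZMod N) + ((j : ℕ) : ZMod N) = ((t + j : ℕ) : ZMod N) by push_cast; ring,
      ZMod.val_natCast, Nat.mod_eq_of_lt (by omega)]
  show tauF h d N _ = c ↔ _
  unfold tauF FF
  rw [Fin.ext_iff]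
  show Gf h _ % d = c.val ↔ _
  rw [hval, Nat.mod_eq_of_lt (by rw [hd3]; exact Gf_lt h hh _ (by omega))]

lemma main_delta (hh : 2 ≤ h) (hd3 : d = 3 * h + 2) (hN8 : N = 8 * h + 6) (t m : ℕ)
    (ht : t < 4 * h + 3) (hm : m ≤ 4 * h + 3) :
    min m (2 * h) ≤ dlt (tauF h d N) ((t : ℕ) : ZMod N) m := by
  have htm : t + m ≤ 8 * h + 6 := by omega
  -- local (nat-level) counts
  set cN : Fin d → ℕ := fun c => ((Finset.range m).filter fun j => Gf h (t + j) = c.val).card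
    with hcN
  have hform : ∀ c : Fin d, cnt (tauF h d N) c ((t : ℕ) : ZMod N) m = cN c :=
    fun c => cnt_formF hh hd3 hN8 c t m htm
  -- pairwise structure
  have key : ∀ u v : ℕ, v < m → ∀ c : Fin d, Gf h (t + u) = c.val → Gf h (t + v) = c.val →
      u < v → ((v - u = 2 * h + 1 ∧ isG1 h (t + u)) ∨ (v - u = 2 * h + 2 ∧ isG2 h (t + u))) := by
    intro u v hv c hgu hgv huv
    have hocc := occG h hh (t + u) (t + v) (by omega) (by omega) (hgu.trans hgv.symm)
    rcases hocc with hc | hc | hc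
    · exact Or.inl ⟨by omega, hc.2⟩
    · exact Or.inr ⟨by omega, hc.2⟩
    · omega
  have hcnt2 : ∀ c : Fin d, cN c ≤ 2 := by
    intro c
    by_contra hcon
    push_neg at hcon
    obtain ⟨a, ha, b, hb, e, he, hab, hae, hbe⟩ := Finset.two_lt_card.mp hcon
    simp only [Finset.mem_filter, Finset.mem_range] at ha hb he
    have tri : ∀ u v w : ℕ, v < m → w < m → Gf h (t + u) = c.val → Gf h (t + v) = c.val →
        Gf h (t + w) = c.val → u < v → v < w → False := by
      intro u v w hv hw hgu hgv hgw huv hvw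
      have g1 := key u v hv c hgu hgv huv
      have g2 := key v w hw c hgv hgw hvw
      have g3 := key u w hw c hgu hgw (by omega)
      omega
    rcases Nat.lt_trichotomy a b with h1 | h1 | h1
    · rcases Nat.lt_trichotomy b e with h2 | h2 | h2
      · exact tri a b e hb.1 he.1 ha.2 hb.2 he.2 h1 h2
      · exact absurd h2 hbe
      · rcases Nat.lt_trichotomy a e with h3 | h3 | h3
        · exact tri a e b he.1 hb.1 ha.2 he.2 hb.2 h3 h2
        · exact absurd h3 hae
        · exact tri e a b ha.1 hb.1 he.2 ha.2 hb.2 h3 h1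
    · exact absurd h1 hab
    · rcases Nat.lt_trichotomy a e with h2 | h2 | h2
      · exact tri b a e ha.1 he.1 hb.2 ha.2 he.2 h1 h2
      · exact absurd h2 hae
      · rcases Nat.lt_trichotomy b e with h3 | h3 | h3
        · exact tri b e a he.1 ha.1 hb.2 he.2 ha.2 h3 h2
        · exact absurd h3 hbe
        · exact tri e b a hb.1 ha.1 he.2 hb.2 ha.2 h3 h1
  -- delta identity
  set T := (Finset.univ.filter fun c : Fin d => cN c = 2).card with hT
  have hδ : dlt (tauF h d N) ((t : ℕ) : ZMod N) m + 2 * T = m := by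
    have hδeq : dlt (tauF h d N) ((t : ℕ) : ZMod N) m
        = (Finset.univ.filter fun c : Fin d => cN c = 1).card := by
      unfold dlt
      congr 1
      apply Finset.filter_congr
      intro c _
      rw [hform c, Nat.odd_iff]
      have := hcnt2 c
      constructor <;> (intro hx; omega)
    have hsum : ∑ c : Fin d, cN c = m := by
      rw [← Finset.sum_congr rfl (fun c _ => hform c)]
      exact sum_cnt _ m
    have hsplit : ∑ c : Fin d, cN c
        = (Finset.univ.filter fun c : Fin d => cN c = 1).card + 2 * T := by
      have hpt : ∀ c : Fin d, cN c
          = (if cN c = 1 then 1 else 0) + (if cN c = 2 then 2 else 0) := by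
        intro c
        have := hcnt2 c
        by_cases h1 : cN c = 1 <;> by_cases h2 : cN c = 2 <;> simp [h1, h2] <;> omega
      rw [Finset.sum_congr rfl (fun c _ => hpt c), Finset.sum_add_distrib]
      congr 1
      · rw [Finset.card_filter]
      · have hmm : ∀ c : Fin d, (if cN c = 2 then 2 else 0)
            = 2 * (if cN c = 2 then 1 else 0) := by
          intro c; split <;> ring
        rw [Finset.sum_congr rfl (fun c _ => hmm c), ← Finset.mul_sum, hT, Finset.card_filter]
    rw [hδeq]
    omega
  -- the set of pair starts
  set W := (Finset.range m).filter
    (fun j => (isG1 h (t + j) ∧ j + (2 * h + 2) ≤ m) ∨ (isG2 h (t + j) ∧ j + (2 * h + 3) ≤ m))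
    with hW
  have hTW : T ≤ W.card := by
    rw [hT]
    apply Finset.card_le_card_of_injOn
      (fun c => if hne : ((Finset.range m).filter fun j => Gf h (t + j) = c.val).Nonempty
        then ((Finset.range m).filter fun j => Gf h (t + j) = c.val).min' hne else 0)
    · intro c hc
      simp only [Finset.mem_coe, Finset.mem_filter, Finset.mem_univ, true_and] at hc
      obtain ⟨j0, j1, hne01, hpair⟩ := Finset.card_eq_two.mp hc
      have hex : ∃ u v : ℕ, u < v ∧
          ((Finset.range m).filter fun j => Gf h (t + j) = c.val) = {u, v} := by
        rcases Nat.lt_or_ge j0 j1 with hlt | hge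
        · exact ⟨j0, j1, hlt, hpair⟩
        · exact ⟨j1, j0, by omega, by rw [hpair, Finset.pair_comm]⟩
      obtain ⟨u, v, huv, hset⟩ := hex
      have humem : u ∈ (Finset.range m).filter fun j => Gf h (t + j) = c.val := by
        rw [hset]; exact Finset.mem_insert_self _ _
      have hvmem : v ∈ (Finset.range m).filter fun j => Gf h (t + j) = c.val := by
        rw [hset]; exact Finset.mem_insert_of_mem (Finset.mem_singleton_self _)
      have hne' : ((Finset.range m).filter fun j => Gf h (t + j) = c.val).Nonempty := ⟨u, humem⟩
      have hfc : (if hne : ((Finset.range m).filter fun j => Gf h (t + j) = c.val).Nonempty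
          then ((Finset.range m).filter fun j => Gf h (t + j) = c.val).min' hne else 0) = u := by
        rw [dif_pos hne']
        have hmm := Finset.min'_mem _ hne'
        have hml := Finset.min'_le _ u humem
        have hmm2 : ((Finset.range m).filter fun j => Gf h (t + j) = c.val).min' hne'
            ∈ ({u, v} : Finset ℕ) := by rw [← hset]; exact hmm
        rcases Finset.mem_insert.mp hmm2 with hx | hx
        · exact hx
        · rw [Finset.mem_singleton] at hx
          omega
      beta_reduce
      rw [Finset.mem_coe, hfc]
      simp only [Finset.mem_filter, Finset.mem_range] at humem hvmem
      obtain ⟨hum, hgu⟩ := humem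
      obtain ⟨hvm, hgv⟩ := hvmem
      have hkey := key u v hvm c hgu hgv huv
      simp only [hW, Finset.mem_filter, Finset.mem_range]
      refine ⟨by omega, ?_⟩
      rcases hkey with ⟨hd1, hg1⟩ | ⟨hd2, hg2⟩
      · exact Or.inl ⟨hg1, by omega⟩
      · exact Or.inr ⟨hg2, by omega⟩
    · intro c1 hc1 c2 hc2 heq
      simp only [Finset.coe_filter, Finset.mem_univ, true_and, Set.mem_setOf_eq] at hc1 hc2
      have hmemf : ∀ c : Fin d, cN c = 2 →
          (if hne : ((Finset.range m).filter fun j => Gf h (t + j) = c.val).Nonempty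
            then ((Finset.range m).filter fun j => Gf h (t + j) = c.val).min' hne else 0)
          ∈ ((Finset.range m).filter fun j => Gf h (t + j) = c.val) := by
        intro c hc2'
        have hne' : ((Finset.range m).filter fun j => Gf h (t + j) = c.val).Nonempty :=
          Finset.card_pos.mp (by rw [show ((Finset.range m).filter
            fun j => Gf h (t + j) = c.val).card = cN c from rfl]; omega)
        rw [dif_pos hne']
        exact Finset.min'_mem _ hne'
      have h1 := hmemf c1 hc1
      have h2 := hmemf c2 hc2
      simp only [] at heq
      rw [heq] at h1
      simp only [Finset.mem_filter] at h1 h2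
      exact Fin.ext (h1.2.symm.trans h2.2)
  have hWb : W.card ≤ (m - 2 * h) / 2 := by
    have hcr : ((Finset.range ((m - 2 * h) / 2)).card) = (m - 2 * h) / 2 := Finset.card_range _
    rw [← hcr]
    rcases Nat.lt_or_ge t (2 * h + 1) with hts | hts
    · apply Finset.card_le_card_of_injOn (fun j => (j + (t + j) % 2) / 2)
      · intro j hj
        simp only [hW, Finset.mem_coe, Finset.mem_filter, Finset.mem_range] at hj
        unfold isG1 isG2 at hj
        simp only [Finset.mem_coe, Finset.mem_range]
        omega
      · intro j hj j' hj' heq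
        simp only [hW, Finset.coe_filter, Finset.mem_range, Set.mem_setOf_eq] at hj hj'
        unfold isG1 isG2 at hj hj'
        simp only [] at heq
        omega
    · apply Finset.card_le_card_of_injOn (fun j => j / 2)
      · intro j hj
        simp only [hW, Finset.mem_coe, Finset.mem_filter, Finset.mem_range] at hj
        unfold isG1 isG2 at hj
        simp only [Finset.mem_coe, Finset.mem_range]
        omega
      · intro j hj j' hj' heq
        simp only [hW, Finset.coe_filter, Finset.mem_range, Set.mem_setOf_eq] at hj hj'
        unfold isG1 isG2 at hj hj'
        simp only [] at heq
        omega
  rcases le_total m (2 * h) with hc | hc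
  · rw [min_eq_left hc]
    omega
  · rw [min_eq_right hc]
    omega

end MainDelta

lemma dlt_one {τ : ZMod N → Fin d} (t : ZMod N) : dlt τ t 1 = 1 := by
  unfold dlt
  have hset : (Finset.univ.filter fun c : Fin d => Odd (cnt τ c t 1)) = {τ t} := by
    ext c
    simp only [Finset.mem_filter, Finset.mem_univ, true_and, Finset.mem_singleton, cnt_one]
    by_cases hc : τ t = c
    · rw [if_pos hc]
      exact ⟨fun _ => hc.symm, fun _ => odd_one⟩
    · rw [if_neg hc]
      constructor
      · intro hodd
        simp at hodd
      · intro hceq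
        exact absurd hceq.symm hc
  rw [hset, Finset.card_singleton]

section ExistAssemble

variable {h d N : ℕ} [NeZero d] [NeZero N]

lemma dlt_shiftP (hN8 : N = 8 * h + 6) (s : ZMod N) (m : ℕ) :
    dlt (tauF h d N) (s + ((4 * h + 3 : ℕ) : ZMod N)) m = dlt (tauF h d N) s m := by
  unfold dlt
  congr 1
  apply Finset.filter_congr
  intro c _
  have hcnteq : cnt (tauF h d N) c (s + ((4 * h + 3 : ℕ) : ZMod N)) m
      = cnt (tauF h d N) c s m := by
    unfold cnt
    congr 1
    apply Finset.filter_congr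
    intro j _
    have hre : (s + ((4 * h + 3 : ℕ) : ZMod N)) + ((j : ℕ) : ZMod N)
        = (s + ((j : ℕ) : ZMod N)) + ((4 * h + 3 : ℕ) : ZMod N) := by ring
    rw [hre, tau_per hN8]
  rw [hcnteq]

lemma main_delta'' (hh : 2 ≤ h) (hd3 : d = 3 * h + 2) (hN8 : N = 8 * h + 6)
    (s : ZMod N) (m : ℕ) (hm : m ≤ 4 * h + 3) :
    min m (2 * h) ≤ dlt (tauF h d N) s m := by
  have hsv : s.val < N := ZMod.val_lt s
  by_cases hcase : s.val < 4 * h + 3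
  · have hs : s = ((s.val : ℕ) : ZMod N) := by rw [ZMod.natCast_val, ZMod.cast_id]
    rw [hs]
    exact main_delta hh hd3 hN8 s.val m hcase hm
  · set s' : ZMod N := ((s.val - (4 * h + 3) : ℕ) : ZMod N) with hs'
    have hsum : s' + ((4 * h + 3 : ℕ) : ZMod N) = s := by
      rw [hs', ← Nat.cast_add, show s.val - (4 * h + 3) + (4 * h + 3) = s.val from by omega,
        ZMod.natCast_val, ZMod.cast_id]
    rw [← hsum, dlt_shiftP hN8]
    exact main_delta hh hd3 hN8 (s.val - (4 * h + 3)) m (by omega) hm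

end ExistAssemble

theorem exist_code (k d : ℕ) (hk : Even k) (hk4 : 4 ≤ k) (hd : 2 * d = 3 * k + 4) :
    ∃ (x : ZMod (4 * k + 6) → Fin d → Bool) (τ : ZMod (4 * k + 6) → Fin d),
      IsCircuitCode d k (4 * k + 6) x ∧ IsTransitionSeq x τ ∧
      ∀ i : ZMod (4 * k + 6), τ (i + ((2 * k + 3 : ℕ) : ZMod (4 * k + 6))) = τ i := by
  obtain ⟨h, hk2⟩ := hk
  have hh : 2 ≤ h := by omega
  have hd3 : d = 3 * h + 2 := by omega
  have hN8 : 4 * k + 6 = 8 * h + 6 := by omega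
  haveI : NeZero d := ⟨by omega⟩
  haveI : NeZero (4 * k + 6) := ⟨by omega⟩
  have htr : IsTransitionSeq (xF h d (4 * k + 6)) (tauF h d (4 * k + 6)) := isTransF hN8
  have hper := tau_per (h := h) (d := d) hN8
  have hspread : ∀ i j : ZMod (4 * k + 6), min (cycDist i j) k ≤
      (hypercube d).dist (xF h d (4 * k + 6) i) (xF h d (4 * k + 6) j) := by
    have half : ∀ i j : ZMod (4 * k + 6), (j - i).val ≤ 4 * h + 3 →
        min (cycDist i j) k ≤
          (hypercube d).dist (xF h d (4 * k + 6) i) (xF h d (4 * k + 6) j) := by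
      intro i j hm
      set m := (j - i).val with hmdef
      have hij : j = i + ((m : ℕ) : ZMod (4 * k + 6)) := by
        rw [hmdef, ZMod.natCast_val, ZMod.cast_id]
        ring
      have hham : (hypercube d).dist (xF h d (4 * k + 6) i) (xF h d (4 * k + 6) j)
          = dlt (tauF h d (4 * k + 6)) i m := by
        rw [hypercube_dist, hij, ham_eq htr]
      rw [hham]
      rcases Nat.eq_zero_or_pos m with h0 | hpos
      · have hcyc : cycDist i j = 0 := by
          have hsub : j - i = 0 := by
            have := (ZMod.val_eq_zero (j - i)).mp (by rw [← hmdef]; exact h0)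
            exact this
          unfold cycDist
          rw [show i - j = 0 from by rw [← neg_sub, hsub, neg_zero], hsub]
          simp [ZMod.val_zero]
        rw [hcyc]
        simp
      · have hne0 : j - i ≠ 0 := by
          intro hz
          rw [hmdef, hz, ZMod.val_zero] at hpos
          omega
        have hcyc : cycDist i j = min ((4 * k + 6) - m) m := by
          unfold cycDist
          have h1 : i - j = -(j - i) := by ring
          rw [h1, ZMod.neg_val, if_neg hne0, ← hmdef]
        have hdelta := main_delta'' hh hd3 hN8 i m hm
        rcases le_total m (2 * h) with hcm | hcm
        · rw [min_eq_left hcm] at hdelta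
          calc min (cycDist i j) k ≤ cycDist i j := min_le_left _ _
            _ ≤ m := by rw [hcyc]; exact min_le_right _ _
            _ ≤ _ := hdelta
        · rw [min_eq_right hcm] at hdelta
          calc min (cycDist i j) k ≤ k := min_le_right _ _
            _ ≤ _ := by omega
    intro i j
    rcases le_or_gt ((j - i).val) (4 * h + 3) with hc | hc
    · exact half i j hc
    · have hne0 : j - i ≠ 0 := by
        intro hz
        rw [hz, ZMod.val_zero] at hc
        omega
      have h2 : (i - j).val ≤ 4 * h + 3 := by
        have h1 : i - j = -(j - i) := by ring
        rw [h1, ZMod.neg_val, if_neg hne0]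
        have := ZMod.val_lt (j - i)
        omega
      have hj := half j i h2
      rw [SimpleGraph.dist_comm] at hj
      rwa [show cycDist j i = cycDist i j from by unfold cycDist; rw [Nat.min_comm]] at hj
  refine ⟨xF h d (4 * k + 6), tauF h d (4 * k + 6), ⟨?_, ?_, hspread⟩, htr, ?_⟩
  · intro i j hxy
    have hs := hspread i j
    rw [hxy, SimpleGraph.dist_self] at hs
    have hcyc0 : cycDist i j = 0 := by
      rcases Nat.min_eq_zero_iff.mp (Nat.le_zero.mp hs) with hc | hc
      · exact hc
      · omega
    unfold cycDist at hcyc0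
    have hor : (i - j).val = 0 ∨ (j - i).val = 0 := Nat.min_eq_zero_iff.mp hcyc0
    have hij0 : j - i = 0 := by
      rcases hor with hc | hc
      · have h1 : i - j = 0 := (ZMod.val_eq_zero _).mp hc
        rw [show j - i = -(i - j) from by ring, h1, neg_zero]
      · exact (ZMod.val_eq_zero _).mp hc
    exact (sub_eq_zero.mp hij0).symm
  · intro i
    show hammingDist _ _ = 1
    have h1 : (i + 1 : ZMod (4 * k + 6)) = i + ((1 : ℕ) : ZMod (4 * k + 6)) := by push_cast; ring
    rw [h1, ham_eq htr i 1, dlt_one]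
  · intro i
    rw [show ((2 * k + 3 : ℕ) : ZMod (4 * k + 6)) = ((4 * h + 3 : ℕ) : ZMod (4 * k + 6)) from by
      congr 1; omega]
    exact hper i

end CC




/-- Lemma 4 (value): for even `k ≥ 4` and `d = (3k+4)/2`, the maximum length of a
symmetric `(d,k)` circuit code is `4k+6`. -/
theorem stmt_4 (k d : ℕ) (hk : Even k) (hk4 : 4 ≤ k) (hd : 2 * d = 3 * k + 4) :
    (∃ (x : ZMod (4 * k + 6) → Fin d → Bool) (τ : ZMod (4 * k + 6) → Fin d),
        IsCircuitCode d k (4 * k + 6) x ∧ IsTransitionSeq x τ ∧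
        ∀ i : ZMod (4 * k + 6), τ (i + ((2 * k + 3 : ℕ) : ZMod (4 * k + 6))) = τ i) ∧
      ∀ (N : ℕ), Even N → ∀ (x : ZMod N → Fin d → Bool) (τ : ZMod N → Fin d),
        IsCircuitCode d k N x → IsTransitionSeq x τ →
        (∀ i : ZMod N, τ (i + ((N / 2 : ℕ) : ZMod N)) = τ i) → N ≤ 4 * k + 6 := by
  constructor
  · exact CC.exist_code k d hk hk4 hd
  · intro N hNe x τ hC hτ hsym
    exact CC.upper_bound hk4 hd N hNe x τ hC hτ hsym
end
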